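/- arXiv:math/9201290 — 3 statements merged into one kernel-verified Lean document; each statement's English description precedes it below -/
import Mathlib

section
/- Let f : [0,1] → [0,1] be a continuous transitive map. Then f^2 has an L-scheme: there exist a point x with f^2(x) = x and a point y such that either f^4(y) ≤ x < y < f^2(y) or f^2(y) < y < x ≤ f^4(y). -/
open Set Function

/-- Topological transitivity of `f` on `[0,1]` (relative topology). -/
def TransitiveOnI (f : ℝ → ℝ) : Prop :=
  ∀ U V : Set ℝ, IsOpen U → IsOpen V → (U ∩ Icc 0 1).Nonempty →
    (V ∩ Icc 0 1).Nonempty → ∃ n : ℕ, (f^[n] '' (U ∩ Icc 0 1) ∩ V).Nonempty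

namespace LS

open scoped Classical

/-- All tails of the `h`-orbit of `x₀` are dense in `[a,b]`. -/
def DT (h : ℝ → ℝ) (x₀ a b : ℝ) : Prop :=
  ∀ N : ℕ, ∀ p q : ℝ, a ≤ p → p < q → q ≤ b → ∃ n, N ≤ n ∧ h^[n] x₀ ∈ Ioo p q

/-- Scheme data of the first kind. -/
def C1 (h : ℝ → ℝ) (a b : ℝ) : Prop :=
  ∃ x u v : ℝ, x ∈ Icc a b ∧ u ∈ Icc a b ∧ v ∈ Icc a b ∧
    h x = x ∧ x < u ∧ u < v ∧ v ≤ h u ∧ h v ≤ x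

/-- Scheme data of the second kind. -/
def C2 (h : ℝ → ℝ) (a b : ℝ) : Prop :=
  ∃ x u v : ℝ, x ∈ Icc a b ∧ u ∈ Icc a b ∧ v ∈ Icc a b ∧
    h x = x ∧ u < x ∧ v < u ∧ h u ≤ v ∧ x ≤ h v

lemma C1.mono {h : ℝ → ℝ} {a b a' b' : ℝ} (hs : Icc a b ⊆ Icc a' b') (hc : C1 h a b) :
    C1 h a' b' := by
  obtain ⟨x, u, v, hx, hu, hv, h1, h2, h3, h4, h5⟩ := hc
  exact ⟨x, u, v, hs hx, hs hu, hs hv, h1, h2, h3, h4, h5⟩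

lemma C2.mono {h : ℝ → ℝ} {a b a' b' : ℝ} (hs : Icc a b ⊆ Icc a' b') (hc : C2 h a b) :
    C2 h a' b' := by
  obtain ⟨x, u, v, hx, hu, hv, h1, h2, h3, h4, h5⟩ := hc
  exact ⟨x, u, v, hs hx, hs hu, hs hv, h1, h2, h3, h4, h5⟩

section Basics

variable {h : ℝ → ℝ} {a b x₀ : ℝ}

lemma iter_maps (maps : MapsTo h (Icc a b) (Icc a b)) (n : ℕ) :
    MapsTo (h^[n]) (Icc a b) (Icc a b) := maps.iterate n

lemma orbit_mem (maps : MapsTo h (Icc a b) (Icc a b)) (hx₀ : x₀ ∈ Icc a b) (n : ℕ) :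
    h^[n] x₀ ∈ Icc a b := iter_maps maps n hx₀

/-- Inside any open interval one can find a subinterval avoiding a finite set. -/
lemma avoid (F : Finset ℝ) : ∀ p q : ℝ, p < q →
    ∃ p' q', p ≤ p' ∧ p' < q' ∧ q' ≤ q ∧ ∀ t ∈ Ioo p' q', t ∉ F := by
  induction F using Finset.induction with
  | empty => exact fun p q hpq => ⟨p, q, le_refl _, hpq, le_refl _,
      fun t _ => Finset.notMem_empty t⟩
  | @insert x F' hxF ih =>
    intro p q hpq
    obtain ⟨p', q', h1, h2, h3, h4⟩ := ih p q hpq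
    by_cases hx : x ∈ Ioo p' q'
    · refine ⟨p', x, h1, hx.1, le_trans (le_of_lt hx.2) h3, ?_⟩
      intro t ht
      have ht' : t ∈ Ioo p' q' := ⟨ht.1, lt_trans ht.2 hx.2⟩
      have := h4 t ht'
      simp only [Finset.mem_insert]
      push_neg
      exact ⟨ne_of_lt ht.2, this⟩
    · refine ⟨p', q', h1, h2, h3, ?_⟩
      intro t ht
      simp only [Finset.mem_insert]
      push_neg
      refine ⟨?_, h4 t ht⟩
      rintro rfl; exact hx ht

/-- A dense-tails orbit never hits a fixed point. -/
lemma DT.not_fixed (dt : DT h x₀ a b) (hab : a < b)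
    (maps : MapsTo h (Icc a b) (Icc a b)) (hx₀ : x₀ ∈ Icc a b)
    {n : ℕ} {z : ℝ} (hz : h^[n] x₀ = z) (hfz : h z = z) : False := by
  have hzmem : z ∈ Icc a b := hz ▸ orbit_mem maps hx₀ n
  have key : ∀ m, n ≤ m → h^[m] x₀ = z := by
    intro m hm
    have : m = (m - n) + n := (Nat.sub_add_cancel hm).symm
    rw [this, Function.iterate_add_apply, hz, Function.iterate_fixed hfz]
  rcases lt_or_eq_of_le hzmem.2 with hlt | heq
  · obtain ⟨m, hm1, hm2⟩ := dt n z b hzmem.1 hlt (le_refl _)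
    rw [key m hm1] at hm2
    exact lt_irrefl z hm2.1
  · have haz : a < z := heq ▸ hab
    obtain ⟨m, hm1, hm2⟩ := dt n a z (le_refl _) haz (hzmem.2)
    rw [key m hm1] at hm2
    exact lt_irrefl z hm2.2

/-- A dense-tails orbit never repeats a value. -/
lemma DT.no_repeat (dt : DT h x₀ a b) (hab : a < b)
    (maps : MapsTo h (Icc a b) (Icc a b)) (hx₀ : x₀ ∈ Icc a b)
    {n₁ n₂ : ℕ} (h12 : n₁ < n₂) (heq : h^[n₁] x₀ = h^[n₂] x₀) : False := by
  set m := n₂ - n₁ with hm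
  have hm1 : 1 ≤ m := by omega
  have hper : ∀ k, h^[n₁ + k] x₀ = h^[n₁ + k % m] x₀ := by
    intro k
    induction k using Nat.strong_induction_on with
    | _ k ih =>
      by_cases hk : k < m
      · rw [Nat.mod_eq_of_lt hk]
      · push_neg at hk
        have hksub : k - m < k := Nat.sub_lt (lt_of_lt_of_le hm1 hk) hm1
        have e1 : n₁ + k = (k - m) + n₂ := by omega
        have e2 : n₁ + (k - m) = (k - m) + n₁ := by omega
        calc h^[n₁ + k] x₀ = h^[(k - m) + n₂] x₀ := by rw [e1]
          _ = h^[k - m] (h^[n₂] x₀) := Function.iterate_add_apply _ _ _ _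
          _ = h^[k - m] (h^[n₁] x₀) := by rw [heq]
          _ = h^[(k - m) + n₁] x₀ := (Function.iterate_add_apply _ _ _ _).symm
          _ = h^[n₁ + (k - m)] x₀ := by rw [e2]
          _ = h^[n₁ + (k - m) % m] x₀ := ih _ hksub
          _ = h^[n₁ + k % m] x₀ := by rw [Nat.mod_eq_sub_mod hk]
  -- all tail values lie in a finite set
  set V : Finset ℝ := (Finset.range n₂).image (fun j => h^[j] x₀) with hV
  obtain ⟨p', q', hp1, hp2, hp3, hp4⟩ := avoid V a b hab
  obtain ⟨k, hk1, hk2⟩ := dt n₁ p' q' hp1 hp2 hp3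
  have : h^[k] x₀ ∈ V := by
    have e : k = n₁ + (k - n₁) := by omega
    rw [e, hper (k - n₁)]
    apply Finset.mem_image_of_mem
    apply Finset.mem_range.mpr
    have := Nat.mod_lt (k - n₁) (show 0 < m by omega)
    omega
  exact hp4 _ hk2 this

/-- IVT: existence of a fixed point between points where `h - id` changes sign. -/
lemma ivt_fix (cont : ContinuousOn h (Icc a b)) {u v : ℝ} (huv : u ≤ v)
    (hu : u ∈ Icc a b) (hv : v ∈ Icc a b) (h1 : u ≤ h u) (h2 : h v ≤ v) :
    ∃ z ∈ Icc u v, h z = z := by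
  have hsub : Icc u v ⊆ Icc a b := Icc_subset_Icc hu.1 hv.2
  have hc : ContinuousOn (fun t => h t - t) (Icc u v) :=
    (cont.mono hsub).sub continuousOn_id
  have : (0:ℝ) ∈ Icc ((fun t => h t - t) v) ((fun t => h t - t) u) := by
    constructor <;> simp <;> linarith
  obtain ⟨z, hz1, hz2⟩ := intermediate_value_Icc' huv hc this
  exact ⟨z, hz1, by simpa [sub_eq_zero] using hz2⟩

/-- IVT: fixed point, other orientation. -/
lemma ivt_fix' (cont : ContinuousOn h (Icc a b)) {u v : ℝ} (huv : u ≤ v)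
    (hu : u ∈ Icc a b) (hv : v ∈ Icc a b) (h1 : h u ≤ u) (h2 : v ≤ h v) :
    ∃ z ∈ Icc u v, h z = z := by
  have hsub : Icc u v ⊆ Icc a b := Icc_subset_Icc hu.1 hv.2
  have hc : ContinuousOn (fun t => h t - t) (Icc u v) :=
    (cont.mono hsub).sub continuousOn_id
  have : (0:ℝ) ∈ Icc ((fun t => h t - t) u) ((fun t => h t - t) v) := by
    constructor <;> simp <;> linarith
  obtain ⟨z, hz1, hz2⟩ := intermediate_value_Icc huv hc this
  exact ⟨z, hz1, by simpa [sub_eq_zero] using hz2⟩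

/-- Constant sign of `h - id` on a fixed-point-free open interval. -/
lemma sign_const (cont : ContinuousOn h (Icc a b)) {α β : ℝ} (hαβ : α < β)
    (hα : α ∈ Icc a b) (hβ : β ∈ Icc a b)
    (hnofix : ∀ t, α < t → t < β → h t ≠ t) :
    (∀ t, α < t → t < β → t < h t) ∨ (∀ t, α < t → t < β → h t < t) := by
  set t₀ := (α + β) / 2 with ht₀
  have ht₀m : α < t₀ ∧ t₀ < β := ⟨by simp [ht₀]; linarith, by simp [ht₀]; linarith⟩
  have hIoo : Ioo α β ⊆ Icc a b := fun t ht => ⟨le_trans hα.1 (le_of_lt ht.1),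
    le_trans (le_of_lt ht.2) hβ.2⟩
  rcases lt_or_gt_of_ne (hnofix t₀ ht₀m.1 ht₀m.2) with hlt | hgt
  · -- h t₀ < t₀ : claim down everywhere
    right
    intro t h1 h2
    by_contra hc
    push_neg at hc
    have hne := hnofix t h1 h2
    have hlt' : t < h t := lt_of_le_of_ne hc (Ne.symm hne)
    -- sign change between t and t₀
    rcases le_or_gt t t₀ with hord | hord
    · obtain ⟨z, hz1, hz2⟩ := ivt_fix cont hord (hIoo ⟨h1, h2⟩) (hIoo ht₀m)
        (le_of_lt hlt') (le_of_lt hlt)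
      exact hnofix z (lt_of_lt_of_le h1 hz1.1) (lt_of_le_of_lt hz1.2 ht₀m.2) hz2
    · obtain ⟨z, hz1, hz2⟩ := ivt_fix' cont (le_of_lt hord) (hIoo ht₀m) (hIoo ⟨h1, h2⟩)
        (le_of_lt hlt) (le_of_lt hlt')
      exact hnofix z (lt_of_lt_of_le ht₀m.1 hz1.1) (lt_of_le_of_lt hz1.2 h2) hz2
  · left
    intro t h1 h2
    by_contra hc
    push_neg at hc
    have hne := hnofix t h1 h2
    have hlt' : h t < t := lt_of_le_of_ne hc hne
    rcases le_or_gt t t₀ with hord | hord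
    · obtain ⟨z, hz1, hz2⟩ := ivt_fix' cont hord (hIoo ⟨h1, h2⟩) (hIoo ht₀m)
        (le_of_lt hlt') (le_of_lt hgt)
      exact hnofix z (lt_of_lt_of_le h1 hz1.1) (lt_of_le_of_lt hz1.2 ht₀m.2) hz2
    · obtain ⟨z, hz1, hz2⟩ := ivt_fix cont (le_of_lt hord) (hIoo ht₀m) (hIoo ⟨h1, h2⟩)
        (le_of_lt hgt) (le_of_lt hlt')
      exact hnofix z (lt_of_lt_of_le ht₀m.1 hz1.1) (lt_of_le_of_lt hz1.2 h2) hz2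

end Basics

section Reflection

/-- Reflection conjugation. -/
def rf (h : ℝ → ℝ) : ℝ → ℝ := fun t => -(h (-t))

variable {h : ℝ → ℝ} {a b x₀ : ℝ}

lemma rf_iterate (h : ℝ → ℝ) : ∀ (n : ℕ) (t : ℝ), (rf h)^[n] t = -(h^[n] (-t)) := by
  intro n
  induction n with
  | zero => intro t; simp
  | succ n ih =>
    intro t
    rw [Function.iterate_succ_apply, Function.iterate_succ_apply, ih]
    simp [rf]

lemma rf_mem_Icc {t : ℝ} (ht : t ∈ Icc (-b) (-a)) : -t ∈ Icc a b := by
  constructor <;> [linarith [ht.2]; linarith [ht.1]]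

lemma rf_mem_Icc' {t : ℝ} (ht : t ∈ Icc a b) : -t ∈ Icc (-b) (-a) := by
  constructor <;> [linarith [ht.2]; linarith [ht.1]]

lemma rf_cont (cont : ContinuousOn h (Icc a b)) :
    ContinuousOn (rf h) (Icc (-b) (-a)) := by
  have hmapsneg : MapsTo (fun t : ℝ => -t) (Icc (-b) (-a)) (Icc a b) :=
    fun t ht => rf_mem_Icc ht
  exact ((cont.comp (continuousOn_neg) hmapsneg)).neg

lemma rf_maps (maps : MapsTo h (Icc a b) (Icc a b)) :
    MapsTo (rf h) (Icc (-b) (-a)) (Icc (-b) (-a)) := by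
  intro t ht
  have := maps (rf_mem_Icc ht)
  simp only [rf]
  constructor <;> [linarith [this.2]; linarith [this.1]]

lemma rf_dt (dt : DT h x₀ a b) : DT (rf h) (-x₀) (-b) (-a) := by
  intro N p q hp hpq hq
  obtain ⟨n, hn1, hn2⟩ := dt N (-q) (-p) (by linarith) (by linarith) (by linarith)
  refine ⟨n, hn1, ?_⟩
  rw [rf_iterate, neg_neg]
  constructor <;> [linarith [hn2.2]; linarith [hn2.1]]

lemma rf_C1 (hc : C1 (rf h) (-b) (-a)) : C2 h a b := by
  obtain ⟨x, u, v, hx, hu, hv, h1, h2, h3, h4, h5⟩ := hc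
  refine ⟨-x, -u, -v, rf_mem_Icc hx, rf_mem_Icc hu, rf_mem_Icc hv, ?_, by linarith,
    by linarith, ?_, ?_⟩
  · simp only [rf] at h1; linarith
  · simp only [rf] at h4; linarith
  · simp only [rf] at h5; linarith

lemma rf_C2 (hc : C2 (rf h) (-b) (-a)) : C1 h a b := by
  obtain ⟨x, u, v, hx, hu, hv, h1, h2, h3, h4, h5⟩ := hc
  refine ⟨-x, -u, -v, rf_mem_Icc hx, rf_mem_Icc hu, rf_mem_Icc hv, ?_, by linarith,
    by linarith, ?_, ?_⟩
  · simp only [rf] at h1; linarith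
  · simp only [rf] at h4; linarith
  · simp only [rf] at h5; linarith

lemma rf_C1' (hc : C1 h a b) : C2 (rf h) (-b) (-a) := by
  obtain ⟨x, u, v, hx, hu, hv, h1, h2, h3, h4, h5⟩ := hc
  refine ⟨-x, -u, -v, rf_mem_Icc' hx, rf_mem_Icc' hu, rf_mem_Icc' hv, ?_, by linarith,
    by linarith, ?_, ?_⟩
  · simp only [rf, neg_neg]; linarith
  · simp only [rf, neg_neg]; linarith
  · simp only [rf, neg_neg]; linarith

lemma rf_C2' (hc : C2 h a b) : C1 (rf h) (-b) (-a) := by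
  obtain ⟨x, u, v, hx, hu, hv, h1, h2, h3, h4, h5⟩ := hc
  refine ⟨-x, -u, -v, rf_mem_Icc' hx, rf_mem_Icc' hu, rf_mem_Icc' hv, ?_, by linarith,
    by linarith, ?_, ?_⟩
  · simp only [rf, neg_neg]; linarith
  · simp only [rf, neg_neg]; linarith
  · simp only [rf, neg_neg]; linarith

end Reflection


section Rules

variable {h : ℝ → ℝ} {a b x₀ : ℝ}

/-- Core lemma: if `x > a` is a fixed point with an "up" interval just above it, and no
C1-scheme exists, then the forward-invariant hull of `[x, x₊]` traps the dense orbit: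
contradiction. -/
lemma up_rule (hab : a < b) (cont : ContinuousOn h (Icc a b))
    (maps : MapsTo h (Icc a b) (Icc a b)) (hx₀ : x₀ ∈ Icc a b) (dt : DT h x₀ a b)
    (noC1 : ¬ C1 h a b) {x xp : ℝ} (hax : a < x) (hxb : x ≤ b) (hfix : h x = x)
    (hxxp : x < xp) (hxpb : xp ≤ b) (hup : ∀ t, x < t → t ≤ xp → t < h t) : False := by
  set M : ℕ → ℝ := fun n => Nat.rec xp (fun _ Mn => sSup (h '' Icc x Mn ∪ {Mn})) n with hMdef
  have hMsucc : ∀ n, M (n+1) = sSup (h '' Icc x (M n) ∪ {M n}) := fun n => rfl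
  have hstep : ∀ n, x < M n → M n ≤ b →
      (x < M (n+1) ∧ M (n+1) ≤ b) ∧ M n ≤ M (n+1) ∧ (∀ t ∈ Icc x (M n), h t ≤ M (n+1)) ∧
      (M (n+1) = M n ∨ ∃ w ∈ Icc x (M n), h w = M (n+1)) := by
    intro n h1 h2
    have hsub : Icc x (M n) ⊆ Icc a b := Icc_subset_Icc (le_of_lt hax) h2
    have hcomp : IsCompact (h '' Icc x (M n) ∪ {M n}) :=
      ((isCompact_Icc).image_of_continuousOn (cont.mono hsub)).union isCompact_singleton
    have hne : (h '' Icc x (M n) ∪ {M n}).Nonempty := ⟨M n, Or.inr rfl⟩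
    have hbdd : BddAbove (h '' Icc x (M n) ∪ {M n}) := hcomp.bddAbove
    have hmem : M (n+1) ∈ h '' Icc x (M n) ∪ {M n} := by
      rw [hMsucc n]; exact hcomp.sSup_mem hne
    have hmono : M n ≤ M (n+1) := by rw [hMsucc n]; exact le_csSup hbdd (Or.inr rfl)
    have himg : ∀ t ∈ Icc x (M n), h t ≤ M (n+1) := by
      intro t ht; rw [hMsucc n]; exact le_csSup hbdd (Or.inl ⟨t, ht, rfl⟩)
    have hle : M (n+1) ≤ b := by
      rw [hMsucc n]
      apply csSup_le hne
      rintro y (⟨t, ht, rfl⟩ | hy)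
      · exact (maps (hsub ht)).2
      · rw [mem_singleton_iff] at hy; rw [hy]; exact h2
    refine ⟨⟨lt_of_lt_of_le h1 hmono, hle⟩, hmono, himg, ?_⟩
    rcases hmem with ⟨w, hw, hweq⟩ | hs
    · exact Or.inr ⟨w, hw, hweq⟩
    · exact Or.inl (by simpa using hs)
  have hgood : ∀ n, x < M n ∧ M n ≤ b := by
    intro n; induction n with
    | zero => exact ⟨hxxp, hxpb⟩
    | succ n ih => exact (hstep n ih.1 ih.2).1
  have K1 : ∀ n, ∀ v, x < v → v ≤ M n → x < h v := by
    intro n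
    induction n with
    | zero => exact fun v hv1 hv2 => lt_trans hv1 (hup v hv1 hv2)
    | succ n ih =>
      intro v hv1 hv2
      rcases le_or_gt v (M n) with hc | hc
      · exact ih v hv1 hc
      rcases (hstep n (hgood n).1 (hgood n).2).2.2.2 with heq | ⟨w, hw, hweq⟩
      · exact absurd (heq ▸ hv2) (not_le.mpr hc)
      have hxw : x ≤ w := hw.1
      have hsub : Icc x w ⊆ Icc a b :=
        Icc_subset_Icc (le_of_lt hax) (le_trans hw.2 (hgood n).2)
      have hvmem : v ∈ Icc (h x) (h w) := by
        rw [hfix, hweq]; exact ⟨le_of_lt hv1, hv2⟩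
      obtain ⟨u, hu1, hu2⟩ := intermediate_value_Icc hxw (cont.mono hsub) hvmem
      have hux : x < u := by
        rcases lt_or_eq_of_le hu1.1 with hlt | heqx
        · exact hlt
        · exfalso; rw [← heqx, hfix] at hu2; exact absurd hu2 (ne_of_lt hv1)
      have huv : u < v := lt_of_le_of_lt (le_trans hu1.2 hw.2) hc
      by_contra hcon
      push_neg at hcon
      apply noC1
      exact ⟨x, u, v, ⟨le_of_lt hax, hxb⟩, hsub hu1,
        ⟨le_trans (le_of_lt hax) (le_of_lt hv1), le_trans hv2 (hgood (n+1)).2⟩,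
        hfix, hux, huv, le_of_eq hu2.symm, hcon⟩
  have hmonoM : Monotone M :=
    monotone_nat_of_le_succ (fun n => (hstep n (hgood n).1 (hgood n).2).2.1)
  have hbddM : BddAbove (Set.range M) := ⟨b, by rintro y ⟨n, rfl⟩; exact (hgood n).2⟩
  set L := ⨆ n, M n with hLdef
  have hML : ∀ n, M n ≤ L := fun n => le_ciSup hbddM n
  have hLb : L ≤ b := ciSup_le (fun n => (hgood n).2)
  have hxL : x < L := lt_of_lt_of_le hxxp (hML 0)
  have hLmem : L ∈ Icc a b := ⟨le_trans (le_of_lt hax) (le_of_lt hxL), hLb⟩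
  have htend : Filter.Tendsto M Filter.atTop (nhds L) := tendsto_atTop_ciSup hmonoM hbddM
  have hMmem : ∀ n, M n ∈ Icc a b :=
    fun n => ⟨le_trans (le_of_lt hax) (le_of_lt (hgood n).1), (hgood n).2⟩
  have htendin : Filter.Tendsto M Filter.atTop (nhdsWithin L (Icc a b)) :=
    tendsto_nhdsWithin_iff.mpr ⟨htend, Filter.Eventually.of_forall hMmem⟩
  have htendh : Filter.Tendsto (fun n => h (M n)) Filter.atTop (nhds (h L)) :=
    (cont L hLmem).tendsto.comp htendin
  have hJ : ∀ v, v ∈ Icc x L → h v ∈ Icc x L := by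
    intro v hv
    rcases eq_or_lt_of_le hv.1 with heq | hxv
    · rw [← heq, hfix]; exact ⟨le_refl _, le_of_lt hxL⟩
    rcases eq_or_lt_of_le hv.2 with heqL | hvL
    · subst heqL
      constructor
      · exact ge_of_tendsto htendh (Filter.Eventually.of_forall
          fun n => le_of_lt (K1 n (M n) (hgood n).1 (le_refl _)))
      · exact le_of_tendsto htendh (Filter.Eventually.of_forall fun n =>
          le_trans ((hstep n (hgood n).1 (hgood n).2).2.2.1 (M n)
            ⟨le_of_lt (hgood n).1, le_refl _⟩) (hML (n+1)))
    · have hvn : ∃ n, v < M n := by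
        by_contra hcon; push_neg at hcon
        exact absurd (ciSup_le hcon) (not_le.mpr hvL)
      obtain ⟨n, hn⟩ := hvn
      constructor
      · exact le_of_lt (K1 n v hxv (le_of_lt hn))
      · exact le_trans ((hstep n (hgood n).1 (hgood n).2).2.2.1 v
          ⟨le_of_lt hxv, le_of_lt hn⟩) (hML (n+1))
  obtain ⟨n₀, -, hn₀⟩ := dt 0 x xp (le_of_lt hax) hxxp hxpb
  have htrap : ∀ k, h^[n₀ + k] x₀ ∈ Icc x L := by
    intro k; induction k with
    | zero => exact ⟨le_of_lt hn₀.1, le_trans (le_of_lt hn₀.2) (hML 0)⟩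
    | succ k ih =>
      have e : n₀ + (k+1) = (n₀ + k) + 1 := rfl
      rw [e, Function.iterate_succ_apply']
      exact hJ _ ih
  obtain ⟨m, hm1, hm2⟩ := dt n₀ a x (le_refl _) hax hxb
  have hIn := htrap (m - n₀)
  rw [show n₀ + (m - n₀) = m by omega] at hIn
  exact absurd hm2.2 (not_lt.mpr hIn.1)

/-- Mirror of `up_rule`. -/
lemma down_rule (hab : a < b) (cont : ContinuousOn h (Icc a b))
    (maps : MapsTo h (Icc a b) (Icc a b)) (hx₀ : x₀ ∈ Icc a b) (dt : DT h x₀ a b)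
    (noC2 : ¬ C2 h a b) {x xm : ℝ} (hax : a ≤ x) (hxb : x < b) (hfix : h x = x)
    (hxmx : xm < x) (haxm : a ≤ xm) (hdown : ∀ t, xm ≤ t → t < x → h t < t) : False := by
  apply up_rule (h := rf h) (a := -b) (b := -a) (x₀ := -x₀) (by linarith) (rf_cont cont)
    (rf_maps maps) (rf_mem_Icc' hx₀) (rf_dt dt) (fun hc => noC2 (rf_C1 hc))
    (x := -x) (xp := -xm) (by linarith) (by linarith) (by simp [rf, hfix])
    (by linarith) (by linarith)
  intro t h1 h2
  have := hdown (-t) (by linarith) (by linarith)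
  simp only [rf]
  linarith

end Rules

section Structure

variable {h : ℝ → ℝ} {a b x₀ : ℝ}

/-- Under no-scheme hypotheses there is at most one interior fixed point. -/
lemma unique_fix (hab : a < b) (cont : ContinuousOn h (Icc a b))
    (maps : MapsTo h (Icc a b) (Icc a b)) (hx₀ : x₀ ∈ Icc a b) (dt : DT h x₀ a b)
    (noC1 : ¬ C1 h a b) (noC2 : ¬ C2 h a b) {x₁ x₂ : ℝ}
    (h1 : x₁ ∈ Ioo a b) (h2 : x₂ ∈ Ioo a b) (hf1 : h x₁ = x₁) (hf2 : h x₂ = x₂)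
    (hlt : x₁ < x₂) : False := by
  by_cases hall : ∀ w, x₁ < w → w < x₂ → h w = w
  · obtain ⟨n, -, hn⟩ := dt 0 x₁ x₂ (le_of_lt h1.1) hlt (le_of_lt h2.2)
    exact dt.not_fixed hab maps hx₀ rfl (hall _ hn.1 hn.2)
  push_neg at hall
  obtain ⟨w, hw1, hw2, hw3⟩ := hall
  have hwmem : w ∈ Icc a b := ⟨le_trans (le_of_lt h1.1) (le_of_lt hw1),
    le_trans (le_of_lt hw2) (le_of_lt h2.2)⟩
  have hclosed : ∀ u v : ℝ, a ≤ u → v ≤ b → IsClosed {t | t ∈ Icc u v ∧ h t = t} := by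
    intro u v hu hv
    have he : {t | t ∈ Icc u v ∧ h t = t} = Icc u v ∩ (fun t => h t - t) ⁻¹' {0} := by
      ext t; simp [sub_eq_zero]
    rw [he]
    exact ContinuousOn.preimage_isClosed_of_isClosed
      ((cont.mono (Icc_subset_Icc hu hv)).sub continuousOn_id) isClosed_Icc isClosed_singleton
  set F₁ := {t | t ∈ Icc x₁ w ∧ h t = t} with hF₁
  set F₂ := {t | t ∈ Icc w x₂ ∧ h t = t} with hF₂
  have hF₁ne : F₁.Nonempty := ⟨x₁, ⟨le_refl _, le_of_lt hw1⟩, hf1⟩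
  have hF₂ne : F₂.Nonempty := ⟨x₂, ⟨le_of_lt hw2, le_refl _⟩, hf2⟩
  have hF₁bdd : BddAbove F₁ := ⟨w, fun t ht => ht.1.2⟩
  have hF₂bdd : BddBelow F₂ := ⟨w, fun t ht => ht.1.1⟩
  set g₁ := sSup F₁ with hg₁
  set g₂ := sInf F₂ with hg₂
  have hg₁mem : g₁ ∈ F₁ := (hclosed x₁ w h1.1.le hwmem.2).csSup_mem hF₁ne hF₁bdd
  have hg₂mem : g₂ ∈ F₂ := (hclosed w x₂ hwmem.1 h2.2.le).csInf_mem hF₂ne hF₂bdd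
  have hg₁w : g₁ < w := lt_of_le_of_ne hg₁mem.1.2 (fun he => hw3 (he ▸ hg₁mem.2))
  have hg₂w : w < g₂ := lt_of_le_of_ne (hg₂mem.1.1) (fun he => hw3 (by rw [he]; exact hg₂mem.2))
  have hg₁ab : g₁ ∈ Icc a b := ⟨le_trans h1.1.le hg₁mem.1.1, le_trans hg₁mem.1.2 hwmem.2⟩
  have hg₂ab : g₂ ∈ Icc a b := ⟨le_trans hwmem.1 hg₂mem.1.1, le_trans hg₂mem.1.2 h2.2.le⟩
  have hnofix : ∀ t, g₁ < t → t < g₂ → h t ≠ t := by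
    intro t ht1 ht2 heq
    rcases le_or_gt t w with hc | hc
    · have : t ∈ F₁ := ⟨⟨le_trans hg₁mem.1.1 (le_of_lt ht1), hc⟩, heq⟩
      exact absurd (le_csSup hF₁bdd this) (not_le.mpr ht1)
    · have : t ∈ F₂ := ⟨⟨le_of_lt hc, le_trans (le_of_lt ht2) hg₂mem.1.2⟩, heq⟩
      exact absurd (csInf_le hF₂bdd this) (not_le.mpr ht2)
  have hg₁g₂ : g₁ < g₂ := lt_trans hg₁w hg₂w
  rcases sign_const cont hg₁g₂ hg₁ab hg₂ab hnofix with hu | hd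
  · exact up_rule hab cont maps hx₀ dt noC1 (x := g₁) (xp := (g₁ + g₂)/2)
      (lt_of_lt_of_le h1.1 hg₁mem.1.1) hg₁ab.2 hg₁mem.2 (by linarith)
      (by linarith [hg₂ab.2]) (fun t ht1 ht2 => hu t ht1 (by linarith))
  · exact down_rule hab cont maps hx₀ dt noC2 (x := g₂) (xm := (g₁ + g₂)/2)
      hg₂ab.1 (lt_of_le_of_lt hg₂mem.1.2 h2.2) hg₂mem.2 (by linarith)
      (by linarith [hg₁ab.1]) (fun t ht1 ht2 => hd t (by linarith) ht2)

/-- Existence of an interior fixed point. -/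
lemma exists_interior_fix (hab : a < b) (cont : ContinuousOn h (Icc a b))
    (maps : MapsTo h (Icc a b) (Icc a b)) (hx₀ : x₀ ∈ Icc a b) (dt : DT h x₀ a b) :
    ∃ c, a < c ∧ c < b ∧ h c = c := by
  by_contra hno
  push_neg at hno
  have hno' : ∀ t, a < t → t < b → h t ≠ t := fun t ht1 ht2 => hno t ht1 ht2
  have hamem : a ∈ Icc a b := left_mem_Icc.mpr hab.le
  have hbmem : b ∈ Icc a b := right_mem_Icc.mpr hab.le
  have ht₀mem : (a+b)/2 ∈ Icc a b := ⟨by linarith, by linarith⟩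
  rcases sign_const cont hab hamem hbmem hno' with hup | hdown
  · -- up on (a,b) : then h b = b, trap ascending
    have hbfix : h b = b := by
      by_contra hbne
      have hblt : h b < b := lt_of_le_of_ne (maps hbmem).2 hbne
      obtain ⟨z, hz1, hz2⟩ := ivt_fix cont (show (a+b)/2 ≤ b by linarith) ht₀mem hbmem
        (le_of_lt (hup _ (by linarith) (by linarith))) (le_of_lt hblt)
      have hzb : z < b := lt_of_le_of_ne hz1.2 (fun he => hbne (he ▸ hz2))
      exact hno' z (by linarith [hz1.1]) hzb hz2
    obtain ⟨n₀, -, hn₀⟩ := dt 0 a b le_rfl hab le_rfl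
    set z := h^[n₀] x₀ with hz
    have htrap : ∀ k, z ≤ h^[n₀+k] x₀ ∧ h^[n₀+k] x₀ ≤ b := by
      intro k; induction k with
      | zero => exact ⟨le_refl _, (orbit_mem maps hx₀ n₀).2⟩
      | succ k ih =>
        have e : n₀ + (k+1) = (n₀ + k) + 1 := rfl
        rw [e, Function.iterate_succ_apply']
        set p := h^[n₀+k] x₀ with hp
        have hpmem : p ∈ Icc a b := orbit_mem maps hx₀ _
        rcases eq_or_lt_of_le ih.2 with heq | hlt
        · rw [heq, hbfix]; exact ⟨le_trans ih.1 ih.2, le_refl _⟩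
        · have hap : a < p := lt_of_lt_of_le hn₀.1 ih.1
          exact ⟨le_trans ih.1 (le_of_lt (hup p hap hlt)), (maps hpmem).2⟩
    obtain ⟨m, hm1, hm2⟩ := dt n₀ a z le_rfl hn₀.1 (le_of_lt hn₀.2)
    have := (htrap (m - n₀)).1
    rw [show n₀ + (m - n₀) = m by omega] at this
    exact absurd hm2.2 (not_lt.mpr this)
  · -- down on (a,b) : then h a = a, trap descending
    have hafix : h a = a := by
      by_contra hane
      have hagt : a < h a := lt_of_le_of_ne (maps hamem).1 (Ne.symm hane)
      obtain ⟨z, hz1, hz2⟩ := ivt_fix cont (show a ≤ (a+b)/2 by linarith) hamem ht₀mem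
        (le_of_lt hagt) (le_of_lt (hdown _ (by linarith) (by linarith)))
      have hza : a < z := lt_of_le_of_ne hz1.1 (fun he => hane (by rw [he]; exact hz2))
      exact hno' z hza (by linarith [hz1.2]) hz2
    obtain ⟨n₀, -, hn₀⟩ := dt 0 a b le_rfl hab le_rfl
    set z := h^[n₀] x₀ with hz
    have htrap : ∀ k, h^[n₀+k] x₀ ≤ z ∧ a ≤ h^[n₀+k] x₀ := by
      intro k; induction k with
      | zero => exact ⟨le_refl _, (orbit_mem maps hx₀ n₀).1⟩
      | succ k ih =>
        have e : n₀ + (k+1) = (n₀ + k) + 1 := rfl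
        rw [e, Function.iterate_succ_apply']
        set p := h^[n₀+k] x₀ with hp
        have hpmem : p ∈ Icc a b := orbit_mem maps hx₀ _
        rcases eq_or_lt_of_le ih.2 with heq | hlt
        · rw [← heq, hafix]; exact ⟨le_trans ih.2 ih.1, le_refl _⟩
        · have hpb : p < b := lt_of_le_of_lt ih.1 hn₀.2
          exact ⟨le_trans (le_of_lt (hdown p hlt hpb)) ih.1, (maps hpmem).1⟩
    obtain ⟨m, hm1, hm2⟩ := dt n₀ z b hn₀.1.le hn₀.2 le_rfl
    have := (htrap (m - n₀)).1
    rw [show n₀ + (m - n₀) = m by omega] at this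
    exact absurd hm2.1 (not_lt.mpr this)

/-- Shape of the map under no-scheme hypotheses: up below the interior fixed point,
down above it. -/
lemma shape (hab : a < b) (cont : ContinuousOn h (Icc a b))
    (maps : MapsTo h (Icc a b) (Icc a b)) (hx₀ : x₀ ∈ Icc a b) (dt : DT h x₀ a b)
    (noC1 : ¬ C1 h a b) (noC2 : ¬ C2 h a b) {c : ℝ}
    (hc1 : a < c) (hc2 : c < b) (hcfix : h c = c) :
    (∀ t, a < t → t < c → t < h t) ∧ (∀ t, c < t → t < b → h t < t) := by
  have hcmem : c ∈ Icc a b := ⟨hc1.le, hc2.le⟩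
  have hamem : a ∈ Icc a b := left_mem_Icc.mpr hab.le
  have hbmem : b ∈ Icc a b := right_mem_Icc.mpr hab.le
  have hnofixL : ∀ t, a < t → t < c → h t ≠ t := fun t ht1 ht2 heq =>
    unique_fix hab cont maps hx₀ dt noC1 noC2 (x₁ := t) (x₂ := c)
      ⟨ht1, lt_trans ht2 hc2⟩ ⟨hc1, hc2⟩ heq hcfix ht2
  have hnofixR : ∀ t, c < t → t < b → h t ≠ t := fun t ht1 ht2 heq =>
    unique_fix hab cont maps hx₀ dt noC1 noC2 (x₁ := c) (x₂ := t)
      ⟨hc1, hc2⟩ ⟨lt_trans hc1 ht1, ht2⟩ hcfix heq ht1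
  constructor
  · rcases sign_const cont hc1 hamem hcmem hnofixL with hu | hd
    · exact hu
    · exfalso
      exact down_rule hab cont maps hx₀ dt noC2 (x := c) (xm := (a+c)/2)
        hc1.le hc2 hcfix (by linarith) (by linarith)
        (fun t ht1 ht2 => hd t (by linarith) ht2)
  · rcases sign_const cont hc2 hcmem hbmem hnofixR with hu | hd
    · exfalso
      exact up_rule hab cont maps hx₀ dt noC1 (x := c) (xp := (c+b)/2)
        hc1 hc2.le hcfix (by linarith) (by linarith)
        (fun t ht1 ht2 => hu t ht1 (by linarith))
    · exact hd

end Structure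

section Launch

variable {h : ℝ → ℝ} {a b x₀ : ℝ}

/-- If the map is "down" on `(s,b)` for a fixed point `s`, some point of `[a,s]` is sent
to `b` (the top is reachable only by launches from `[a,s]`). -/
lemma launch (hab : a < b) (cont : ContinuousOn h (Icc a b))
    (maps : MapsTo h (Icc a b) (Icc a b)) (hx₀ : x₀ ∈ Icc a b) (dt : DT h x₀ a b)
    {s : ℝ} (has : a < s) (hsb : s < b) (hfix : h s = s)
    (hdown : ∀ t, s < t → t < b → h t < t) : ∃ r ∈ Icc a s, h r = b := by
  have hout : ∃ j, h^[j] x₀ ∉ Ioo s b := by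
    obtain ⟨j, -, hj2⟩ := dt 0 a s le_rfl has (le_of_lt hsb)
    exact ⟨j, fun hmem => absurd hj2.2 (not_lt.mpr (le_of_lt hmem.1))⟩
  have hB : ∀ ε : ℝ, 0 < ε → ε < b - s → (h b = b ∨ ε < b - h b) →
      ∃ w ∈ Icc a s, b - ε < h w := by
    intro ε hε1 hε2 hε3
    obtain ⟨J, hJ⟩ := hout
    obtain ⟨n, hn1, hn2⟩ := dt (J+1) (b - ε) b (by linarith) (by linarith) le_rfl
    set P : ℕ → Prop := fun j => h^[j] x₀ ∉ Ioo s b with hP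
    set k := Nat.findGreatest P n with hk
    have hkP : P k := Nat.findGreatest_spec (m := J) (by omega) hJ
    have hkn : k ≤ n := Nat.findGreatest_le n
    have hknlt : k < n := by
      rcases lt_or_eq_of_le hkn with h' | h'
      · exact h'
      · exfalso; apply hkP; rw [h']; exact ⟨by linarith [hn2.1], hn2.2⟩
    have hin : ∀ j, k < j → j ≤ n → h^[j] x₀ ∈ Ioo s b := by
      intro j hj1 hj2
      by_contra hcon
      exact (Nat.findGreatest_is_greatest hj1 hj2) hcon
    have hdesc : ∀ j, k + 1 ≤ j → j ≤ n → h^[j] x₀ ≤ h^[k+1] x₀ := by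
      intro j hj1
      induction j, hj1 using Nat.le_induction with
      | base => intro _; exact le_refl _
      | succ j hj ih =>
        intro hjn
        have hjn' : j ≤ n := by omega
        have hmem := hin j (by omega) hjn'
        have : h^[j+1] x₀ = h (h^[j] x₀) := Function.iterate_succ_apply' h j x₀
        rw [this]
        exact le_trans (le_of_lt (hdown _ hmem.1 hmem.2)) (ih hjn')
    have hhigh : b - ε < h^[k+1] x₀ := lt_of_lt_of_le hn2.1 (hdesc n (by omega) le_rfl)
    set w := h^[k] x₀ with hw
    have hwval : h w = h^[k+1] x₀ := (Function.iterate_succ_apply' h k x₀).symm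
    have hwmem : w ∈ Icc a b := orbit_mem maps hx₀ k
    rcases le_or_gt w s with hws | hws
    · exact ⟨w, ⟨hwmem.1, hws⟩, by rw [hwval]; exact hhigh⟩
    · -- w ∉ Ioo s b and w > s forces w = b
      have hwb : w = b := by
        rcases lt_or_eq_of_le hwmem.2 with h' | h'
        · exact absurd ⟨hws, h'⟩ hkP
        · exact h'
      rcases hε3 with hbfix | hεb
      · exact absurd (dt.not_fixed hab maps hx₀ (n := k) hwb hbfix) not_false
      · exfalso
        have h2 : b - ε < h w := by rw [hwval]; exact hhigh
        rw [hwb] at h2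
        linarith
  -- Step C : extract a limit point
  have hseq : ∀ m : ℕ, ∃ w ∈ Icc a s, b - 1/(m+1) < h w := by
    intro m
    have hm1 : (0:ℝ) < 1/(m+1) := by positivity
    by_cases hbfix : h b = b
    · set ε := min ((b-s)/2) (1/(m+1)) with hε
      have hε1 : 0 < ε := lt_min (by linarith) hm1
      obtain ⟨w, hw1, hw2⟩ := hB ε hε1 (lt_of_le_of_lt (min_le_left _ _) (by linarith))
        (Or.inl hbfix)
      refine ⟨w, hw1, lt_of_le_of_lt ?_ hw2⟩
      have := min_le_right ((b-s)/2) (1/(m+1:ℝ))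
      linarith
    · have hblt : h b < b := lt_of_le_of_ne (maps (right_mem_Icc.mpr hab.le)).2 hbfix
      set ε := min (min ((b-s)/2) ((b - h b)/2)) (1/(m+1)) with hε
      have hε1 : 0 < ε := lt_min (lt_min (by linarith) (by linarith)) hm1
      obtain ⟨w, hw1, hw2⟩ := hB ε hε1
        (lt_of_le_of_lt (le_trans (min_le_left _ _) (min_le_left _ _)) (by linarith))
        (Or.inr (lt_of_le_of_lt (le_trans (min_le_left _ _) (min_le_right _ _)) (by linarith)))
      refine ⟨w, hw1, lt_of_le_of_lt ?_ hw2⟩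
      have := min_le_right (min ((b-s)/2) ((b - h b)/2)) (1/(m+1:ℝ))
      linarith
  choose w hw1 hw2 using hseq
  obtain ⟨r, hr, φ, hφ, htends⟩ := (isCompact_Icc (a := a) (b := s)).tendsto_subseq hw1
  have hrab : r ∈ Icc a b := ⟨hr.1, le_trans hr.2 (le_of_lt hsb)⟩
  have hsubab : Icc a s ⊆ Icc a b := Icc_subset_Icc le_rfl (le_of_lt hsb)
  have htendsin : Filter.Tendsto (fun m => w (φ m)) Filter.atTop (nhdsWithin r (Icc a b)) :=
    tendsto_nhdsWithin_iff.mpr ⟨htends, Filter.Eventually.of_forall fun m => hsubab (hw1 (φ m))⟩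
  have htendh : Filter.Tendsto (fun m => h (w (φ m))) Filter.atTop (nhds (h r)) :=
    (cont r hrab).tendsto.comp htendsin
  have hlow : Filter.Tendsto (fun m : ℕ => b - 1/((φ m : ℝ)+1)) Filter.atTop (nhds b) := by
    have h0 : Filter.Tendsto (fun m : ℕ => 1/((φ m : ℝ)+1)) Filter.atTop (nhds 0) :=
      tendsto_one_div_add_atTop_nhds_zero_nat.comp hφ.tendsto_atTop
    have := Filter.Tendsto.sub (tendsto_const_nhds (x := b)) h0
    simpa using this
  have htendb : Filter.Tendsto (fun m => h (w (φ m))) Filter.atTop (nhds b) := by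
    apply tendsto_of_tendsto_of_tendsto_of_le_of_le hlow tendsto_const_nhds
    · exact fun m => le_of_lt (hw2 (φ m))
    · exact fun m => (maps (hsubab (hw1 (φ m)))).2
  have : h r = b := tendsto_nhds_unique htendh htendb
  exact ⟨r, hr, this⟩

/-- Mirror of `launch`. -/
lemma launch' (hab : a < b) (cont : ContinuousOn h (Icc a b))
    (maps : MapsTo h (Icc a b) (Icc a b)) (hx₀ : x₀ ∈ Icc a b) (dt : DT h x₀ a b)
    {s : ℝ} (has : a < s) (hsb : s < b) (hfix : h s = s)
    (hup : ∀ t, a < t → t < s → t < h t) : ∃ r ∈ Icc s b, h r = a := by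
  have hd : ∀ t, -s < t → t < -a → rf h t < t := by
    intro t h1 h2
    have := hup (-t) (by linarith) (by linarith)
    simp only [rf]; linarith
  obtain ⟨r, hr, hreq⟩ := launch (h := rf h) (a := -b) (b := -a) (x₀ := -x₀) (by linarith)
    (rf_cont cont) (rf_maps maps) (rf_mem_Icc' hx₀) (rf_dt dt) (s := -s) (by linarith)
    (by linarith) (by simp [rf, hfix]) hd
  refine ⟨-r, ⟨by linarith [hr.2], by linarith [hr.1]⟩, ?_⟩
  simp only [rf] at hreq; linarith

/-- The "half" lemma: a dense-tails system on `[a,b]` whose right endpoint is fixed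
admits a scheme. -/
lemma half (hab : a < b) (cont : ContinuousOn h (Icc a b))
    (maps : MapsTo h (Icc a b) (Icc a b)) (hx₀ : x₀ ∈ Icc a b) (dt : DT h x₀ a b)
    (hbfix : h b = b) : C1 h a b ∨ C2 h a b := by
  by_contra hcon
  push_neg at hcon
  obtain ⟨noC1, noC2⟩ := hcon
  obtain ⟨c, hc1, hc2, hcfix⟩ := exists_interior_fix hab cont maps hx₀ dt
  obtain ⟨hupL, hdownR⟩ := shape hab cont maps hx₀ dt noC1 noC2 hc1 hc2 hcfix
  obtain ⟨r, hr, hrb⟩ := launch hab cont maps hx₀ dt hc1 hc2 hcfix hdownR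
  obtain ⟨r', hr', hra⟩ := launch' hab cont maps hx₀ dt hc1 hc2 hcfix hupL
  apply noC2
  have hrc : r < c := lt_of_le_of_ne hr.2 (fun he => by
    rw [he, hcfix] at hrb; exact absurd hrb (ne_of_lt hc2))
  have hr'c : c < r' := lt_of_le_of_ne hr'.1 (fun he => by
    rw [← he, hcfix] at hra; exact absurd hra (ne_of_gt hc1))
  have hr'b : r' < b := lt_of_le_of_ne hr'.2 (fun he => by
    rw [he, hbfix] at hra; exact absurd hra (ne_of_gt hab))
  refine ⟨b, r', r, right_mem_Icc.mpr hab.le,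
    ⟨le_trans hc1.le hr'.1, hr'.2⟩, ⟨hr.1, le_trans hr.2 hc2.le⟩,
    hbfix, hr'b, lt_trans hrc hr'c, ?_, ?_⟩
  · rw [hra]; exact hr.1
  · rw [hrb]

/-- Mirror: left endpoint fixed. -/
lemma half' (hab : a < b) (cont : ContinuousOn h (Icc a b))
    (maps : MapsTo h (Icc a b) (Icc a b)) (hx₀ : x₀ ∈ Icc a b) (dt : DT h x₀ a b)
    (hafix : h a = a) : C1 h a b ∨ C2 h a b := by
  rcases half (h := rf h) (a := -b) (b := -a) (x₀ := -x₀) (by linarith) (rf_cont cont)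
    (rf_maps maps) (rf_mem_Icc' hx₀) (rf_dt dt) (by simp [rf, hafix]) with hc | hc
  · exact Or.inr (rf_C1 hc)
  · exact Or.inl (rf_C2 hc)

end Launch

section PartM

variable {f : ℝ → ℝ} {a b x₀ : ℝ}

/-- Part M: if both the `f`-orbit and the `f²`-orbit of `x₀` have dense tails,
then `f²` admits a scheme. -/
lemma partM (hab : a < b) (contf : ContinuousOn f (Icc a b))
    (mapsf : MapsTo f (Icc a b) (Icc a b)) (hx₀ : x₀ ∈ Icc a b)
    (dtf : DT f x₀ a b) (dtg : DT (f ∘ f) x₀ a b) :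
    C1 (f ∘ f) a b ∨ C2 (f ∘ f) a b := by
  set g := f ∘ f with hg
  have contg : ContinuousOn g (Icc a b) := contf.comp contf mapsf
  have mapsg : MapsTo g (Icc a b) (Icc a b) := mapsf.comp mapsf
  by_contra hcon
  push_neg at hcon
  obtain ⟨noC1, noC2⟩ := hcon
  obtain ⟨c, hc1, hc2, hcfix⟩ := exists_interior_fix hab contf mapsf hx₀ dtf
  have hgc : g c = c := by show f (f c) = c; rw [hcfix, hcfix]
  obtain ⟨hupL, hdownR⟩ := shape hab contg mapsg hx₀ dtg noC1 noC2 hc1 hc2 hgc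
  obtain ⟨r, hr, hrb⟩ := launch hab contg mapsg hx₀ dtg hc1 hc2 hgc hdownR
  obtain ⟨r', hr', hra⟩ := launch' hab contg mapsg hx₀ dtg hc1 hc2 hgc hupL
  have hrc : r < c := lt_of_le_of_ne hr.2 (fun he => by
    rw [he, hgc] at hrb; exact absurd hrb (ne_of_lt hc2))
  have hr'c : c < r' := lt_of_le_of_ne hr'.1 (fun he => by
    rw [← he, hgc] at hra; exact absurd hra (ne_of_gt hc1))
  have hrmem : r ∈ Icc a b := ⟨hr.1, le_trans hr.2 hc2.le⟩
  have hr'mem : r' ∈ Icc a b := ⟨le_trans hc1.le hr'.1, hr'.2⟩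
  by_cases hga : g a = a
  · apply noC1
    have hra' : a < r := lt_of_le_of_ne hr.1 (fun he => by
      rw [← he, hga] at hrb; exact absurd hrb (ne_of_lt hab))
    exact ⟨a, r, r', left_mem_Icc.mpr hab.le, hrmem, hr'mem, hga, hra',
      lt_trans hrc hr'c, by rw [hrb]; exact hr'.2, by rw [hra]⟩
  by_cases hgb : g b = b
  · apply noC2
    have hr'b : r' < b := lt_of_le_of_ne hr'.2 (fun he => by
      rw [he, hgb] at hra; exact absurd hra (ne_of_gt hab))
    exact ⟨b, r', r, right_mem_Icc.mpr hab.le, hr'mem, hrmem, hgb, hr'b,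
      lt_trans hrc hr'c, by rw [hra]; exact hr.1, by rw [hrb]⟩
  -- neither endpoint is g-fixed : the final chase
  have huniq : ∀ t, a < t → t < b → f t = t → t = c := by
    intro t ht1 ht2 htf
    have hgt : g t = t := by show f (f t) = t; rw [htf, htf]
    by_contra hne
    rcases lt_or_gt_of_ne hne with hlt | hgt'
    · exact unique_fix hab contg mapsg hx₀ dtg noC1 noC2 (x₁ := t) (x₂ := c)
        ⟨ht1, ht2⟩ ⟨hc1, hc2⟩ hgt hgc hlt
    · exact unique_fix hab contg mapsg hx₀ dtg noC1 noC2 (x₁ := c) (x₂ := t)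
        ⟨hc1, hc2⟩ ⟨ht1, ht2⟩ hgc hgt hgt'
  have hfb : f b < b := by
    rcases lt_or_eq_of_le (mapsf (right_mem_Icc.mpr hab.le)).2 with h' | h'
    · exact h'
    · exact absurd (show g b = b by show f (f b) = b; rw [h', h']) hgb
  have hfa : a < f a := by
    rcases lt_or_eq_of_le (mapsf (left_mem_Icc.mpr hab.le)).1 with h' | h'
    · exact h'
    · exact absurd (show g a = a by show f (f a) = a; rw [← h', ← h']) hga
  have hρdef : f (f r) = b := hrb
  set ρ := f r with hρ
  have hρmem : ρ ∈ Icc a b := mapsf hrmem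
  have hρne : ρ ≠ c := fun he => by
    rw [he, hcfix] at hρdef; exact absurd hρdef (ne_of_lt hc2)
  have hρc : ρ < c := by
    rcases lt_or_gt_of_ne hρne with h' | h'
    · exact h'
    exfalso
    have hρb : ρ < b := lt_of_le_of_ne hρmem.2 (fun he => by
      rw [he] at hρdef; exact absurd hρdef (ne_of_lt hfb))
    obtain ⟨z, hz1, hz2⟩ := ivt_fix contf (le_of_lt hρb) hρmem (right_mem_Icc.mpr hab.le)
      (by rw [hρdef]; exact hρmem.2) (le_of_lt hfb)
    have hzb : z < b := lt_of_le_of_ne hz1.2 (fun he => by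
      rw [he] at hz2; exact absurd hz2 (ne_of_lt hfb))
    have hza : a < z := lt_of_lt_of_le (lt_trans hc1 h') hz1.1
    have hzc := huniq z hza hzb hz2
    rw [hzc] at hz1
    exact absurd hz1.1 (not_le.mpr h')
  set σ := f r' with hσ
  have hσdef : f σ = a := hra
  have hσmem : σ ∈ Icc a b := mapsf hr'mem
  have hσne : σ ≠ c := fun he => by
    rw [he, hcfix] at hσdef; exact absurd hσdef (ne_of_gt hc1)
  have hσc : c < σ := by
    rcases lt_or_gt_of_ne hσne with h' | h'
    swap
    · exact h'
    exfalso
    have hσa : a < σ := lt_of_le_of_ne hσmem.1 (fun he => by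
      rw [← he] at hσdef; exact absurd hσdef (ne_of_gt hfa))
    obtain ⟨z, hz1, hz2⟩ := ivt_fix contf (le_of_lt hσa) (left_mem_Icc.mpr hab.le) hσmem
      (le_of_lt hfa) (by rw [hσdef]; exact hσmem.1)
    have hza : a < z := lt_of_le_of_ne hz1.1 (fun he => by
      rw [← he] at hz2; exact absurd hz2 (ne_of_gt hfa))
    have hzb : z < b := lt_of_le_of_lt hz1.2 (lt_trans h' hc2)
    have hzc := huniq z hza hzb hz2
    rw [hzc] at hz1
    exact absurd hz1.2 (not_le.mpr h')
  obtain ⟨τ, hτ1, hτ2⟩ : ∃ τ ∈ Icc c σ, f τ = a := by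
    have hmem : a ∈ Icc (f σ) (f c) := by rw [hσdef, hcfix]; exact ⟨le_rfl, hc1.le⟩
    exact intermediate_value_Icc' (le_of_lt hσc)
      (contf.mono (Icc_subset_Icc hc1.le hσmem.2)) hmem
  obtain ⟨t, ht1, ht2⟩ : ∃ t ∈ Icc ρ c, f t = τ := by
    have hmem : τ ∈ Icc (f c) (f ρ) := by
      rw [hcfix, hρdef]; exact ⟨hτ1.1, le_trans hτ1.2 hσmem.2⟩
    exact intermediate_value_Icc' (le_of_lt hρc)
      (contf.mono (Icc_subset_Icc hρmem.1 hc2.le)) hmem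
  have hgt : g t = a := by show f (f t) = a; rw [ht2, hτ2]
  have htc : t < c := lt_of_le_of_ne ht1.2 (fun he => by
    rw [he, hgc] at hgt; exact absurd hgt (ne_of_gt hc1))
  have hta : a < t := by
    rcases lt_or_eq_of_le (le_trans hρmem.1 ht1.1) with h' | h'
    · exact h'
    · exfalso; rw [← h'] at hgt; exact hga hgt
  have hlt := hupL t hta htc
  rw [hgt] at hlt
  exact absurd hlt (not_lt.mpr hta.le)

end PartM

section PartS

variable {f : ℝ → ℝ} {a b x₀ : ℝ}

lemma g_comm (f : ℝ → ℝ) : ∀ (n : ℕ) (x : ℝ), (f ∘ f)^[n] (f x) = f ((f ∘ f)^[n] x) := by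
  intro n
  induction n with
  | zero => intro x; simp
  | succ n ih =>
    intro x
    rw [Function.iterate_succ_apply, Function.iterate_succ_apply]
    have he : (f ∘ f) (f x) = f ((f ∘ f) x) := rfl
    rw [he, ih]

lemma g_eq_f2 (f : ℝ → ℝ) (n : ℕ) (x : ℝ) : (f ∘ f)^[n] x = f^[2*n] x := by
  have h2 : f^[2] = f ∘ f := by
    funext t
    rw [show (2:ℕ) = 1 + 1 from rfl, Function.iterate_add_apply]
    simp
  rw [Function.iterate_mul, h2]

lemma max_lt_min {w ε : ℝ} (hab : a < b) (hw : w ∈ Icc a b) (hε : 0 < ε) :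
    max a (w - ε) < min b (w + ε) := by
  simp only [max_lt_iff, lt_min_iff]
  refine ⟨⟨hab, ?_⟩, ?_, ?_⟩ <;> linarith [hw.1, hw.2]

/-- Around any point of `Icc a b` not in a closed set `S`, there is an open interval in
`Icc a b` disjoint from `S`. -/
lemma exists_Ioo_avoid (hab : a < b) {S : Set ℝ} (hS : IsClosed S) {w : ℝ}
    (hw : w ∈ Icc a b) (hwS : w ∉ S) :
    ∃ p q, a ≤ p ∧ p < q ∧ q ≤ b ∧ ∀ t ∈ Ioo p q, t ∉ S := by
  have hopen : IsOpen Sᶜ := hS.isOpen_compl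
  obtain ⟨ε, hε, hball⟩ := Metric.isOpen_iff.mp hopen w hwS
  refine ⟨max a (w - ε/2), min b (w + ε/2), le_max_left _ _,
    max_lt_min hab hw (by linarith), min_le_left _ _, ?_⟩
  intro t ht
  apply hball
  rw [Metric.mem_ball, Real.dist_eq, abs_sub_lt_iff]
  have h1 : w - ε/2 ≤ max a (w - ε/2) := le_max_right _ _
  have h2 : min b (w + ε/2) ≤ w + ε/2 := min_le_right _ _
  exact ⟨by linarith [ht.2], by linarith [ht.1]⟩

/-- Points of `Icc a b` are in the closure of the orbit. -/
lemma mem_closure_orbit (hab : a < b) (dtf : DT f x₀ a b) {y : ℝ} (hy : y ∈ Icc a b) :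
    y ∈ closure (Set.range (fun m => f^[m] x₀)) := by
  rw [Metric.mem_closure_iff]
  intro ε hε
  obtain ⟨n, -, hn⟩ := dtf 0 (max a (y - ε/2)) (min b (y + ε/2)) (le_max_left _ _)
    (max_lt_min hab hy (by linarith)) (min_le_left _ _)
  refine ⟨f^[n] x₀, ⟨n, rfl⟩, ?_⟩
  rw [Real.dist_eq, abs_sub_lt_iff]
  have h1 : y - ε/2 ≤ max a (y - ε/2) := le_max_right _ _
  have h2 : min b (y + ε/2) ≤ y + ε/2 := min_le_right _ _
  exact ⟨by linarith [hn.1], by linarith [hn.2]⟩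

/-- Closedness of connected components of a closed set. -/
lemma comp_closed {S : Set ℝ} (hS : IsClosed S) (y : ℝ) :
    IsClosed (connectedComponentIn S y) := by
  by_cases hy : y ∈ S
  · apply closure_subset_iff_isClosed.mp
    apply IsPreconnected.subset_connectedComponentIn
      (isPreconnected_connectedComponentIn.closure)
      (subset_closure (mem_connectedComponentIn hy))
    exact closure_minimal (connectedComponentIn_subset _ _) hS
  · rw [connectedComponentIn_eq_empty hy]
    exact isClosed_empty

/-- The main theorem in the dense-orbit setting. -/
lemma main (hab : a < b) (contf : ContinuousOn f (Icc a b))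
    (mapsf : MapsTo f (Icc a b) (Icc a b)) (hx₀ : x₀ ∈ Icc a b)
    (dtf : DT f x₀ a b) : C1 (f ∘ f) a b ∨ C2 (f ∘ f) a b := by
  set g := f ∘ f with hg
  have contg : ContinuousOn g (Icc a b) := contf.comp contf mapsf
  have mapsg : MapsTo g (Icc a b) (Icc a b) := mapsf.comp mapsf
  have hx₁ : f x₀ ∈ Icc a b := mapsf hx₀
  set E : Set ℝ := closure (Set.range (fun n => g^[n] x₀)) with hE
  set E' : Set ℝ := closure (Set.range (fun n => g^[n] (f x₀))) with hE'
  have hEcl : IsClosed E := isClosed_closure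
  have hE'cl : IsClosed E' := isClosed_closure
  have hrangeE : Set.range (fun n => g^[n] x₀) ⊆ Icc a b := by
    rintro y ⟨n, rfl⟩; exact orbit_mem mapsg hx₀ n
  have hrangeE' : Set.range (fun n => g^[n] (f x₀)) ⊆ Icc a b := by
    rintro y ⟨n, rfl⟩; exact orbit_mem mapsg hx₁ n
  have hEsub : E ⊆ Icc a b := closure_minimal hrangeE isClosed_Icc
  have hE'sub : E' ⊆ Icc a b := closure_minimal hrangeE' isClosed_Icc
  have hgE : ∀ y ∈ E, g y ∈ E := by
    intro y hy
    have h1 : g '' E ⊆ closure (g '' Set.range (fun n => g^[n] x₀)) :=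
      ContinuousOn.image_closure (contg.mono hEsub)
    have h2 : g '' Set.range (fun n => g^[n] x₀) ⊆ Set.range (fun n => g^[n] x₀) := by
      rintro z ⟨w, ⟨n, rfl⟩, rfl⟩
      refine ⟨n+1, ?_⟩
      show g^[n+1] x₀ = g (g^[n] x₀)
      exact Function.iterate_succ_apply' g n x₀
    exact closure_mono h2 (h1 ⟨y, hy, rfl⟩)
  have hgE' : ∀ y ∈ E', g y ∈ E' := by
    intro y hy
    have h1 : g '' E' ⊆ closure (g '' Set.range (fun n => g^[n] (f x₀))) :=
      ContinuousOn.image_closure (contg.mono hE'sub)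
    have h2 : g '' Set.range (fun n => g^[n] (f x₀)) ⊆ Set.range (fun n => g^[n] (f x₀)) := by
      rintro z ⟨w, ⟨n, rfl⟩, rfl⟩
      refine ⟨n+1, ?_⟩
      show g^[n+1] (f x₀) = g (g^[n] (f x₀))
      exact Function.iterate_succ_apply' g n (f x₀)
    exact closure_mono h2 (h1 ⟨y, hy, rfl⟩)
  have hfE : ∀ y ∈ E, f y ∈ E' := by
    intro y hy
    have h1 : f '' E ⊆ closure (f '' Set.range (fun n => g^[n] x₀)) :=
      ContinuousOn.image_closure (contf.mono hEsub)
    have h2 : f '' Set.range (fun n => g^[n] x₀) ⊆ Set.range (fun n => g^[n] (f x₀)) := by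
      rintro z ⟨w, ⟨n, rfl⟩, rfl⟩
      refine ⟨n, ?_⟩
      show (f ∘ f)^[n] (f x₀) = f ((f ∘ f)^[n] x₀)
      exact g_comm f n x₀
    exact closure_mono h2 (h1 ⟨y, hy, rfl⟩)
  have hfE' : ∀ y ∈ E', f y ∈ E := by
    intro y hy
    have h1 : f '' E' ⊆ closure (f '' Set.range (fun n => g^[n] (f x₀))) :=
      ContinuousOn.image_closure (contf.mono hE'sub)
    have h2 : f '' Set.range (fun n => g^[n] (f x₀)) ⊆ Set.range (fun n => g^[n] x₀) := by
      rintro z ⟨w, ⟨n, rfl⟩, rfl⟩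
      refine ⟨n+1, ?_⟩
      show (f ∘ f)^[n+1] x₀ = f ((f ∘ f)^[n] (f x₀))
      rw [g_comm f n x₀]
      exact Function.iterate_succ_apply' (f ∘ f) n x₀
    exact closure_mono h2 (h1 ⟨y, hy, rfl⟩)
  have hunion : ∀ y ∈ Icc a b, y ∈ E ∨ y ∈ E' := by
    intro y hy
    have hcl := mem_closure_orbit hab dtf hy
    have hsub : Set.range (fun m => f^[m] x₀) ⊆ E ∪ E' := by
      rintro z ⟨m, rfl⟩
      rcases Nat.even_or_odd m with ⟨k, hk⟩ | ⟨k, hk⟩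
      · left
        apply subset_closure
        refine ⟨k, ?_⟩
        show (f ∘ f)^[k] x₀ = f^[m] x₀
        rw [g_eq_f2, hk, two_mul]
      · right
        apply subset_closure
        refine ⟨k, ?_⟩
        show (f ∘ f)^[k] (f x₀) = f^[m] x₀
        rw [g_eq_f2, hk, Function.iterate_add_apply f (2*k) 1 x₀]
        simp
    have := closure_mono hsub hcl
    rw [closure_union, hEcl.closure_eq, hE'cl.closure_eq] at this
    exact this
  have htailcl : ∀ (base : ℝ) (N : ℕ) (y : ℝ),
      y ∈ closure (Set.range fun n => g^[n] base) →
      y ∉ closure (Set.range fun n => g^[N + n] base) → ∃ j < N, g^[j] base = y := by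
    intro base N y hy hyn
    have hsplit : Set.range (fun n => g^[n] base) ⊆
        (Set.range fun n => g^[N + n] base) ∪ ((fun j => g^[j] base) '' {j | j < N}) := by
      rintro z ⟨n, rfl⟩
      rcases le_or_gt N n with h' | h'
      · refine Or.inl ⟨n - N, ?_⟩
        show g^[N + (n - N)] base = g^[n] base
        rw [show N + (n - N) = n by omega]
      · exact Or.inr ⟨n, h', rfl⟩
    have h2 := closure_mono hsplit hy
    rw [closure_union] at h2
    rcases h2 with h' | h'
    · exact absurd h' hyn
    · have hfin : ((fun j => g^[j] base) '' {j | j < N}).Finite :=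
        Set.Finite.image _ (finite_lt_nat N)
      rw [hfin.isClosed.closure_eq] at h'
      obtain ⟨j, hj, hje⟩ := h'
      exact ⟨j, hj, hje⟩
  have hvisit : ∀ (base : ℝ), ∀ (N : ℕ) (p q : ℝ), p < q →
      (Ioo p q ⊆ closure (Set.range fun n => g^[n] base)) →
      ∃ n, N ≤ n ∧ g^[n] base ∈ Ioo p q := by
    intro base N p q hpq hsub
    obtain ⟨p', q', h1, h2, h3, h4⟩ :=
      avoid ((Finset.range N).image (fun j => g^[j] base)) p q hpq
    have hymem : (p' + q')/2 ∈ Ioo p' q' := ⟨by linarith, by linarith⟩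
    have hycl : (p' + q')/2 ∈ closure (Set.range fun n => g^[n] base) :=
      hsub ⟨lt_of_le_of_lt h1 hymem.1, lt_of_lt_of_le hymem.2 h3⟩
    rw [_root_.mem_closure_iff] at hycl
    obtain ⟨z, hz1, hz2⟩ := hycl (Ioo p' q') isOpen_Ioo hymem
    obtain ⟨m, hm⟩ := hz2
    have hm' : g^[m] base = z := hm
    have hmN : N ≤ m := by
      by_contra hcon
      push_neg at hcon
      apply h4 _ hz1
      rw [← hm']
      exact Finset.mem_image_of_mem _ (Finset.mem_range.mpr hcon)
    refine ⟨m, hmN, ?_⟩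
    rw [hm']
    exact ⟨lt_of_le_of_lt h1 hz1.1, lt_of_lt_of_le hz1.2 h3⟩
  by_cases hEfull : Icc a b ⊆ E
  · have dtg : DT g x₀ a b := by
      intro N p q hp hpq hq
      apply hvisit x₀ N p q hpq
      intro z hz
      exact hEfull ⟨le_trans hp hz.1.le, le_trans hz.2.le hq⟩
    exact partM hab contf mapsf hx₀ dtf dtg
  by_cases hE'full : Icc a b ⊆ E'
  · have dtf' : DT f (f x₀) a b := by
      intro N p q hp hpq hq
      obtain ⟨n, hn1, hn2⟩ := dtf (N+1) p q hp hpq hq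
      obtain ⟨k, rfl⟩ : ∃ k, n = k + 1 := ⟨n - 1, by omega⟩
      refine ⟨k, by omega, ?_⟩
      rw [← Function.iterate_succ_apply]
      exact hn2
    have dtg' : DT g (f x₀) a b := by
      intro N p q hp hpq hq
      apply hvisit (f x₀) N p q hpq
      intro z hz
      exact hE'full ⟨le_trans hp hz.1.le, le_trans hz.2.le hq⟩
    exact partM hab contf mapsf hx₁ dtf' dtg'
  -- both proper
  rw [Set.not_subset] at hEfull hE'full
  obtain ⟨wE, hwE1, hwE2⟩ := hEfull
  obtain ⟨wE', hwE'1, hwE'2⟩ := hE'full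
  obtain ⟨c, hc1, hc2, hcfix⟩ := exists_interior_fix hab contf mapsf hx₀ dtf
  have hgc : g c = c := by show f (f c) = c; rw [hcfix, hcfix]
  have hcE : c ∈ E := by
    rcases hunion c ⟨hc1.le, hc2.le⟩ with h' | h'
    · exact h'
    · have := hfE' c h'
      rw [hcfix] at this; exact this
  have hcE' : c ∈ E' := by
    have := hfE c hcE
    rw [hcfix] at this; exact this
  -- no neighborhood of c is inside E
  have hnonbhd : ∀ δ : ℝ, 0 < δ → ¬ (Ioo (c - δ) (c + δ) ⊆ E) := by
    intro δ hδ hsub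
    rw [_root_.mem_closure_iff] at hcE'
    obtain ⟨z, hz1, hz2⟩ := hcE' (Ioo (c-δ) (c+δ)) isOpen_Ioo ⟨by linarith, by linarith⟩
    obtain ⟨m, hm⟩ := hz2
    have hm' : g^[m] (f x₀) = z := hm
    have hzE : g^[m] (f x₀) ∈ E := by rw [hm']; exact hsub hz1
    have htail : ∀ k, g^[m + k] (f x₀) ∈ E := by
      intro k; induction k with
      | zero => exact hzE
      | succ k ih =>
        rw [show m+(k+1) = (m+k)+1 from rfl, Function.iterate_succ_apply']
        exact hgE _ ih
    have hE'cover : ∀ y ∈ E', y ∈ E ∨ ∃ j < m, g^[j] (f x₀) = y := by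
      intro y hy
      by_cases hyt : y ∈ closure (Set.range fun n => g^[m + n] (f x₀))
      · left
        have hsub2 : Set.range (fun n => g^[m+n] (f x₀)) ⊆ E := by
          rintro u ⟨k, rfl⟩; exact htail k
        exact closure_minimal hsub2 hEcl hyt
      · right; exact htailcl (f x₀) m y hy hyt
    obtain ⟨p, q, hp, hpq, hq, havoid⟩ := exists_Ioo_avoid hab hEcl hwE1 hwE2
    have hIoosub : Ioo p q ⊆ (fun j => g^[j] (f x₀)) '' {j | j < m} := by
      intro t ht
      have htmem : t ∈ Icc a b := ⟨le_trans hp ht.1.le, le_trans ht.2.le hq⟩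
      have htE' : t ∈ E' := by
        rcases hunion t htmem with h' | h'
        · exact absurd h' (havoid t ht)
        · exact h'
      rcases hE'cover t htE' with h' | ⟨j, hj, hje⟩
      · exact absurd h' (havoid t ht)
      · exact ⟨j, hj, hje⟩
    have hfin : ((fun j => g^[j] (f x₀)) '' {j | j < m}).Finite :=
      Set.Finite.image _ (finite_lt_nat m)
    exact (Set.Ioo_infinite hpq).mono hIoosub hfin
  -- the connected component of c in E
  set C := connectedComponentIn E c with hC
  have hcC : c ∈ C := mem_connectedComponentIn hcE
  have hCsub : C ⊆ E := connectedComponentIn_subset _ _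
  have hCclosed : IsClosed C := comp_closed hEcl c
  have hgC : ∀ y ∈ C, g y ∈ C := by
    intro y hy
    have hpre : IsPreconnected (g '' C) :=
      isPreconnected_connectedComponentIn.image g (contg.mono (hCsub.trans hEsub))
    have hsubE : g '' C ⊆ E := by rintro z ⟨u, hu, rfl⟩; exact hgE u (hCsub hu)
    have hcin : c ∈ g '' C := ⟨c, hcC, hgc⟩
    exact hpre.subset_connectedComponentIn hcin hsubE ⟨y, hy, rfl⟩
  have hCbddA : BddAbove C := ⟨b, fun t ht => (hEsub (hCsub ht)).2⟩
  have hCbddB : BddBelow C := ⟨a, fun t ht => (hEsub (hCsub ht)).1⟩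
  set A' := sInf C with hA'
  set B' := sSup C with hB'
  have hA'mem : A' ∈ C := hCclosed.csInf_mem ⟨c, hcC⟩ hCbddB
  have hB'mem : B' ∈ C := hCclosed.csSup_mem ⟨c, hcC⟩ hCbddA
  have hCicc : C = Icc A' B' := by
    apply Subset.antisymm
    · exact fun t ht => ⟨csInf_le hCbddB ht, le_csSup hCbddA ht⟩
    · exact (isPreconnected_connectedComponentIn.ordConnected).out hA'mem hB'mem
  have hA'c : A' ≤ c := csInf_le hCbddB hcC
  have hcB' : c ≤ B' := le_csSup hCbddA hcC
  by_cases hdeg : A' < B'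
  · -- nondegenerate component : c is an endpoint, apply the half lemma
    have hend : c = A' ∨ c = B' := by
      by_contra hcon
      push_neg at hcon
      have h1 : A' < c := lt_of_le_of_ne hA'c (Ne.symm hcon.1)
      have h2 : c < B' := lt_of_le_of_ne hcB' hcon.2
      refine hnonbhd (min (c - A') (B' - c)) (lt_min (by linarith) (by linarith)) ?_
      intro t ht
      apply hCsub
      rw [hCicc]
      have hm1 := min_le_left (c - A') (B' - c)
      have hm2 := min_le_right (c - A') (B' - c)
      exact ⟨by linarith [ht.1], by linarith [ht.2]⟩
    have hIooC : Ioo A' B' ⊆ E := fun t ht => hCsub (by rw [hCicc]; exact ⟨ht.1.le, ht.2.le⟩)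
    obtain ⟨n₁, -, hn₁⟩ := hvisit x₀ 0 A' B' hdeg (fun t ht => hIooC ht)
    set z₁ := g^[n₁] x₀ with hz₁
    have hz₁C : z₁ ∈ C := by rw [hCicc]; exact ⟨hn₁.1.le, hn₁.2.le⟩
    have hA'B'sub : Icc A' B' ⊆ Icc a b := by
      rw [← hCicc]; exact fun t ht => hEsub (hCsub ht)
    have dtC : DT g z₁ A' B' := by
      intro N p q hp hpq hq
      have hsubcl : Ioo p q ⊆ closure (Set.range fun n => g^[n] x₀) := by
        intro t ht
        exact hIooC ⟨lt_of_le_of_lt hp ht.1, lt_of_lt_of_le ht.2 hq⟩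
      obtain ⟨n, hn1, hn2⟩ := hvisit x₀ (n₁ + N) p q hpq hsubcl
      refine ⟨n - n₁, by omega, ?_⟩
      rw [hz₁, ← Function.iterate_add_apply, show n - n₁ + n₁ = n by omega]
      exact hn2
    have hz₁ab : z₁ ∈ Icc A' B' := by rw [← hCicc]; exact hz₁C
    have contC : ContinuousOn g (Icc A' B') := contg.mono hA'B'sub
    have mapsC : MapsTo g (Icc A' B') (Icc A' B') := by
      intro t ht
      rw [← hCicc] at ht ⊢
      exact hgC t ht
    rcases hend with hcA | hcB
    · rcases half' hdeg contC mapsC hz₁ab dtC (by rw [← hcA]; exact hgc) with h' | h'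
      · exact Or.inl (h'.mono hA'B'sub)
      · exact Or.inr (h'.mono hA'B'sub)
    · rcases half hdeg contC mapsC hz₁ab dtC (by rw [← hcB]; exact hgc) with h' | h'
      · exact Or.inl (h'.mono hA'B'sub)
      · exact Or.inr (h'.mono hA'B'sub)
  · -- degenerate component : component-cycle contradiction
    exfalso
    have hA'B' : A' = B' := le_antisymm (le_trans hA'c hcB') (not_lt.mp hdeg)
    have hA'eq : A' = c := le_antisymm hA'c (by rw [hA'B']; exact hcB')
    have hCc : C = {c} := by
      rw [hCicc, ← hA'B', hA'eq, Icc_self]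
    obtain ⟨p₀, q₀, hp₀, hpq₀, hq₀, havoid₀⟩ := exists_Ioo_avoid hab hE'cl hwE'1 hwE'2
    have hIooE : Ioo p₀ q₀ ⊆ E := by
      intro t ht
      rcases hunion t ⟨le_trans hp₀ ht.1.le, le_trans ht.2.le hq₀⟩ with h' | h'
      · exact h'
      · exact absurd h' (havoid₀ t ht)
    have hIooEcl : Ioo p₀ q₀ ⊆ closure (Set.range fun n => g^[n] x₀) := hIooE
    obtain ⟨k₀, -, hk₀⟩ := hvisit x₀ 0 p₀ q₀ hpq₀ hIooEcl
    obtain ⟨k₁, hk₁N, hk₁⟩ := hvisit x₀ (k₀ + 1) p₀ q₀ hpq₀ hIooEcl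
    set m := k₁ - k₀ with hmdef
    have hm1 : 1 ≤ m := by omega
    set D : ℕ → Set ℝ := fun i => connectedComponentIn E (g^[k₀ + i] x₀) with hD
    have horbE : ∀ j : ℕ, g^[j] x₀ ∈ E := fun j => subset_closure ⟨j, rfl⟩
    have hDmem : ∀ i, g^[k₀ + i] x₀ ∈ D i := fun i => mem_connectedComponentIn (horbE _)
    have hDsub : ∀ i, D i ⊆ E := fun i => connectedComponentIn_subset _ _
    have hDstep : ∀ i, ∀ y ∈ D i, g y ∈ D (i+1) := by
      intro i y hy
      have hpre : IsPreconnected (g '' D i) :=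
        isPreconnected_connectedComponentIn.image g (contg.mono ((hDsub i).trans hEsub))
      have hsubE : g '' D i ⊆ E := by rintro u ⟨v, hv, rfl⟩; exact hgE v (hDsub i hv)
      have hptin : g^[k₀ + (i+1)] x₀ ∈ g '' D i := by
        refine ⟨g^[k₀ + i] x₀, hDmem i, ?_⟩
        rw [show k₀ + (i+1) = (k₀ + i) + 1 from rfl, Function.iterate_succ_apply']
      exact hpre.subset_connectedComponentIn hptin hsubE ⟨y, hy, rfl⟩
    have hDiter : ∀ i k, ∀ y ∈ D i, g^[k] y ∈ D (i + k) := by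
      intro i k
      induction k with
      | zero => intro y hy; simpa using hy
      | succ k ih =>
        intro y hy
        rw [Function.iterate_succ_apply', show i + (k+1) = (i+k)+1 from rfl]
        exact hDstep _ _ (ih y hy)
    have hIooD : Ioo p₀ q₀ ⊆ D 0 := by
      have := (isPreconnected_Ioo (a := p₀) (b := q₀)).subset_connectedComponentIn
        (x := g^[k₀ + 0] x₀) ?_ (fun t ht => hIooE ht)
      · exact this
      · rw [Nat.add_zero]; exact hk₀
    have hD0m : D m = D 0 := by
      have hmem1 : g^[k₀ + m] x₀ ∈ D 0 := by
        rw [show k₀ + m = k₁ by omega]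
        exact hIooD hk₁
      exact (connectedComponentIn_eq hmem1).symm
    have hper : ∀ i, D (i + m) = D i := by
      intro i
      have hmem2 : g^[k₀ + (i + m)] x₀ ∈ D i := by
        have he2 : k₀ + (i + m) = i + (k₀ + m) := by omega
        rw [he2, Function.iterate_add_apply]
        have h3 : g^[k₀ + m] x₀ ∈ D 0 := by rw [← hD0m]; exact hDmem m
        have h4 := hDiter 0 i _ h3
        rw [Nat.zero_add] at h4
        exact h4
      exact (connectedComponentIn_eq hmem2).symm
    have hmod : ∀ t, D t = D (t % m) := by
      intro t
      induction t using Nat.strong_induction_on with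
      | _ t ih =>
        by_cases ht : t < m
        · rw [Nat.mod_eq_of_lt ht]
        · push_neg at ht
          have h6 : D t = D (t - m) := by
            conv_lhs => rw [show t = (t - m) + m by omega]
            exact hper (t - m)
          rw [h6, ih _ (by omega), Nat.mod_eq_sub_mod ht]
    set W := ⋃ i ∈ Finset.range m, D i with hW
    have hWclosed : IsClosed W :=
      Set.Finite.isClosed_biUnion (Finset.finite_toSet _) (fun i _ => comp_closed hEcl _)
    have htailW : ∀ k : ℕ, g^[k₀ + k] x₀ ∈ W := by
      intro k
      have h5 := hDmem k
      rw [hmod k] at h5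
      exact Set.mem_biUnion (Finset.mem_coe.mpr (Finset.mem_range.mpr
        (Nat.mod_lt _ (by omega)))) h5
    by_cases hct : c ∈ closure (Set.range fun n => g^[k₀ + n] x₀)
    · have hsub3 : Set.range (fun n => g^[k₀ + n] x₀) ⊆ W := by
        rintro u ⟨k, rfl⟩; exact htailW k
      have hcW : c ∈ W := closure_minimal hsub3 hWclosed hct
      simp only [hW, Set.mem_iUnion] at hcW
      obtain ⟨i, -, hcDi⟩ := hcW
      have hDiC : D i = C := connectedComponentIn_eq hcDi
      have hpt : g^[k₀ + i] x₀ ∈ C := by rw [← hDiC]; exact hDmem i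
      rw [hCc, mem_singleton_iff] at hpt
      have hpt2 : f^[2*(k₀+i)] x₀ = c := by rw [← g_eq_f2]; exact hpt
      exact dtf.not_fixed hab mapsf hx₀ hpt2 hcfix
    · obtain ⟨j, hj, hje⟩ := htailcl x₀ k₀ c hcE hct
      have hpt2 : f^[2*j] x₀ = c := by rw [← g_eq_f2]; exact hje
      exact dtf.not_fixed hab mapsf hx₀ hpt2 hcfix

end PartS


section Baire

/-- Transitivity gives a point with dense orbit tails. -/
lemma exists_dense_tails (f : ℝ → ℝ) (hf : ContinuousOn f (Icc 0 1))
    (hmaps : MapsTo f (Icc 0 1) (Icc 0 1)) (htrans : TransitiveOnI f) :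
    ∃ x₀ ∈ Icc (0:ℝ) 1, DT f x₀ 0 1 := by
  haveI : CompleteSpace ↥(Icc (0:ℝ) 1) := (isClosed_Icc).completeSpace_coe
  haveI : Nonempty ↥(Icc (0:ℝ) 1) := ⟨⟨0, by norm_num⟩⟩
  set X := ↥(Icc (0:ℝ) 1) with hX
  set F : X → X := MapsTo.restrict f _ _ hmaps with hF
  have hFcont : Continuous F := hf.mapsToRestrict hmaps
  have hFiter : ∀ (n : ℕ) (x : X), ((F^[n] x : X) : ℝ) = f^[n] (x : ℝ) := by
    intro n
    induction n with
    | zero => intro x; simp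
    | succ n ih =>
      intro x
      rw [Function.iterate_succ_apply', Function.iterate_succ_apply']
      rw [hF, MapsTo.val_restrict_apply, ih]
  set ι := {pq : ℚ × ℚ // ((Ioo (pq.1 : ℝ) pq.2) ∩ Icc 0 1).Nonempty} with hι
  set G : ι → Set X := fun i =>
    ⋃ n : ℕ, (F^[n]) ⁻¹' (Subtype.val ⁻¹' (Ioo (i.1.1 : ℝ) (i.1.2 : ℝ))) with hG
  have hGopen : ∀ i, IsOpen (G i) := by
    intro i
    apply isOpen_iUnion
    intro n
    exact (hFcont.iterate n).isOpen_preimage _ (isOpen_Ioo.preimage continuous_subtype_val)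
  have hGdense : ∀ i, Dense (G i) := by
    intro i
    rw [dense_iff_inter_open]
    intro U hU hUne
    obtain ⟨U', hU', hUeq⟩ := isOpen_induced_iff.mp hU
    obtain ⟨x, hx⟩ := hUne
    have hxU' : (x : ℝ) ∈ U' ∩ Icc 0 1 := ⟨by rw [← hUeq] at hx; exact hx, x.2⟩
    obtain ⟨n, z, ⟨w, hw, hwz⟩, hz2⟩ := htrans U' (Ioo (i.1.1 : ℝ) (i.1.2 : ℝ)) hU'
      isOpen_Ioo ⟨x, hxU'⟩ i.2
    refine ⟨⟨w, hw.2⟩, ?_, ?_⟩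
    · rw [← hUeq]; exact hw.1
    · refine Set.mem_iUnion.mpr ⟨n, ?_⟩
      simp only [Set.mem_preimage]
      rw [hFiter n ⟨w, hw.2⟩]
      rw [hwz]
      exact hz2
  have hdense : Dense (⋂ i, G i) := dense_iInter_of_isOpen hGopen hGdense
  obtain ⟨x₀X, hx₀X⟩ := hdense.nonempty
  refine ⟨(x₀X : ℝ), x₀X.2, ?_⟩
  intro N p q hp hpq hq
  have hIccsub : Ioo p q ⊆ Icc (0:ℝ) 1 := fun t ht => ⟨le_trans hp ht.1.le, le_trans ht.2.le hq⟩
  obtain ⟨p', q', h1, h2, h3, h4⟩ :=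
    avoid ((Finset.range N).image (fun j => f^[j] (x₀X : ℝ))) p q hpq
  obtain ⟨ρ₁, hρ₁⟩ := exists_rat_btwn (show p' < (p' + q')/2 by linarith)
  obtain ⟨ρ₂, hρ₂⟩ := exists_rat_btwn (show (p' + q')/2 < q' by linarith)
  have hρ : (ρ₁ : ℝ) < ρ₂ := lt_trans hρ₁.2 hρ₂.1
  have hmid : ((ρ₁:ℝ) + ρ₂)/2 ∈ Ioo (ρ₁:ℝ) ρ₂ := ⟨by linarith, by linarith⟩
  have hIooρ : Ioo ((ρ₁:ℝ)) (ρ₂:ℝ) ⊆ Ioo p' q' :=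
    fun t ht => ⟨lt_trans hρ₁.1 ht.1, lt_trans ht.2 hρ₂.2⟩
  have hIooρ' : Ioo ((ρ₁:ℝ)) (ρ₂:ℝ) ⊆ Ioo p q :=
    fun t ht => ⟨lt_of_le_of_lt h1 (hIooρ ht).1, lt_of_lt_of_le (hIooρ ht).2 h3⟩
  have hne : ((Ioo ((ρ₁:ℝ)) (ρ₂:ℝ)) ∩ Icc 0 1).Nonempty :=
    ⟨((ρ₁:ℝ) + ρ₂)/2, hmid, hIccsub (hIooρ' hmid)⟩
  set i : ι := ⟨(ρ₁, ρ₂), hne⟩ with hi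
  have hx₀i : x₀X ∈ G i := Set.mem_iInter.mp hx₀X i
  rw [hG] at hx₀i
  simp only [Set.mem_iUnion, Set.mem_preimage] at hx₀i
  obtain ⟨n, hn⟩ := hx₀i
  rw [hFiter n x₀X] at hn
  have hnmem : f^[n] (x₀X : ℝ) ∈ Ioo p q := hIooρ' hn
  refine ⟨n, ?_, hnmem⟩
  by_contra hcon
  push_neg at hcon
  exact h4 _ (hIooρ hn)
    (Finset.mem_image_of_mem _ (Finset.mem_range.mpr hcon))

end Baire

end LS

theorem stmt_14 (f : ℝ → ℝ) (hf : ContinuousOn f (Icc 0 1))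
    (hmaps : MapsTo f (Icc 0 1) (Icc 0 1)) (htrans : TransitiveOnI f) :
    ∃ x ∈ Icc (0:ℝ) 1, ∃ y ∈ Icc (0:ℝ) 1, f^[2] x = x ∧
      ((f^[4] y ≤ x ∧ x < y ∧ y < f^[2] y) ∨ (f^[2] y < y ∧ y < x ∧ x ≤ f^[4] y)) := by
  obtain ⟨x₀, hx₀, dt⟩ := LS.exists_dense_tails f hf hmaps htrans
  have h01 : (0:ℝ) < 1 := one_pos
  have contg : ContinuousOn (f ∘ f) (Icc 0 1) := hf.comp hf hmaps
  have hf2 : ∀ t : ℝ, f^[2] t = (f ∘ f) t := by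
    intro t
    rw [← LS.g_eq_f2 f 1 t]
    simp
  have hf4 : ∀ t : ℝ, f^[4] t = (f ∘ f) ((f ∘ f) t) := by
    intro t
    have := LS.g_eq_f2 f 2 t
    rw [show 2*2 = 4 by norm_num] at this
    rw [← this]
    rw [show (2:ℕ) = 1 + 1 from rfl, Function.iterate_add_apply]
    simp
  rcases LS.main h01 hf hmaps hx₀ dt with hc | hc
  · obtain ⟨x, u, v, hx, hu, hv, hfix, hxu, huv, hvhu, hhvx⟩ := hc
    have hsub : Icc u v ⊆ Icc (0:ℝ) 1 := Icc_subset_Icc hu.1 hv.2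
    obtain ⟨y, hy1, hy2⟩ : ∃ y ∈ Icc u v, (f ∘ f) y = v := by
      have hmem : v ∈ Icc ((f ∘ f) v) ((f ∘ f) u) :=
        ⟨le_trans hhvx (le_of_lt (lt_trans hxu huv)), hvhu⟩
      exact intermediate_value_Icc' huv.le (contg.mono hsub) hmem
    have hyv : y < v := by
      rcases lt_or_eq_of_le hy1.2 with h' | h'
      · exact h'
      · exfalso
        rw [h'] at hy2
        have := hhvx
        rw [hy2] at this
        linarith [lt_trans hxu huv]
    refine ⟨x, hx, y, hsub hy1, ?_, Or.inl ⟨?_, ?_, ?_⟩⟩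
    · rw [hf2]; exact hfix
    · rw [hf4, hy2]; exact hhvx
    · exact lt_of_lt_of_le hxu hy1.1
    · rw [hf2, hy2]; exact hyv
  · obtain ⟨x, u, v, hx, hu, hv, hfix, hux, hvu, hhuv, hxhv⟩ := hc
    have hsub : Icc v u ⊆ Icc (0:ℝ) 1 := Icc_subset_Icc hv.1 hu.2
    obtain ⟨y, hy1, hy2⟩ : ∃ y ∈ Icc v u, (f ∘ f) y = v := by
      have hmem : v ∈ Icc ((f ∘ f) u) ((f ∘ f) v) :=
        ⟨hhuv, le_trans (le_of_lt (lt_trans hvu hux)) hxhv⟩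
      exact intermediate_value_Icc' hvu.le (contg.mono hsub) hmem
    have hvy : v < y := by
      rcases lt_or_eq_of_le hy1.1 with h' | h'
      · exact h'
      · exfalso
        rw [← h'] at hy2
        have := hxhv
        rw [hy2] at this
        linarith [lt_trans hvu hux]
    refine ⟨x, hx, y, hsub hy1, ?_, Or.inr ⟨?_, ?_, ?_⟩⟩
    · rw [hf2]; exact hfix
    · rw [hf2, hy2]; exact hvy
    · exact lt_of_le_of_lt hy1.2 hux
    · rw [hf4, hy2]; exact hxhv
end

section
/- Let f : [0,1] → [0,1] be continuous. If x ∈ Ω(f) (the non-wandering set of f), then x lies in the closure of ⋃_{n≥1} f^{-n}(x), i.e., x is a limit of its own preimages. -/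
open Set Function

section proofs
open Filter Topology

private
lemma final_aux (g : ℝ → ℝ) (c x : ℝ) (hcx : c < x)
    (hgcont : ContinuousOn g (Icc c x))
    (hgmaps : MapsTo g (Icc c x) (Icc c x))
    (hpre : ∀ z ∈ Ioo c x, ∀ m, 1 ≤ m → g^[m] z ≠ x)
    (hxp : ∀ m, 1 ≤ m → g^[m] x ≠ x)
    (δ : ℕ → ℝ) (hδ : Tendsto δ atTop (𝓝 0))
    (w : ℕ → ℝ) (hw : ∀ k, w k ∈ Icc c x)
    (t : ℕ → ℕ) (ht : ∀ k, 1 ≤ t k)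
    (hv : ∀ k, g^[t k] (w k) ∈ Ioo (x - δ k) x)
    (ξ : ℝ) (hwξ : Tendsto w atTop (𝓝 ξ))
    (hξc : g c = x → ξ = c → False) : False := by
  have hxmem : x ∈ Icc c x := ⟨hcx.le, le_rfl⟩
  -- iterates stay in Icc c x
  have hiter : ∀ s, ∀ z ∈ Icc c x, g^[s] z ∈ Icc c x := by
    intro s
    induction s with
    | zero => intro z hz; simpa using hz
    | succ n ih =>
      intro z hz
      rw [Function.iterate_succ_apply]
      exact ih _ (hgmaps hz)
  -- classify membership in Icc
  have hclass : ∀ z ∈ Icc c x, z = c ∨ z ∈ Ioo c x ∨ z = x := by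
    intro z hz
    rcases eq_or_lt_of_le hz.1 with h1 | h1
    · exact Or.inl h1.symm
    rcases eq_or_lt_of_le hz.2 with h2 | h2
    · exact Or.inr (Or.inr h2)
    · exact Or.inr (Or.inl ⟨h1, h2⟩)
  -- max of g on Icc c x
  obtain ⟨wb, hwbmem, hwbmax⟩ := isCompact_Icc.exists_isMaxOn ⟨x, hxmem⟩ hgcont
  have hwbmax' : ∀ y ∈ Icc c x, g y ≤ g wb := fun y hy => hwbmax hy
  have hMle : g wb ≤ x := (hgmaps hwbmem).2
  rcases lt_or_eq_of_le hMle with hM | hM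
  · -- case M < x : iterates are bounded by M, contradiction with returns
    obtain ⟨k, hk⟩ := (hδ.eventually_lt_const (show (0:ℝ) < x - g wb by linarith)).exists
    have hb : g^[t k] (w k) ≤ g wb := by
      obtain ⟨s, hs⟩ := Nat.exists_eq_add_of_le (ht k)
      rw [hs, Function.iterate_add_apply]
      exact hwbmax' _ (hiter s _ (hw k))
    have := (hv k).1
    linarith
  · -- case M = x
    have hgcW : g wb = x := hM
    have hwbc : wb = c := by
      rcases hclass wb hwbmem with h | h | h
      · exact h
      · exact absurd hgcW (by simpa using hpre wb h 1 le_rfl)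
      · exact absurd hgcW (by rw [h]; simpa using hxp 1 le_rfl)
    have hgc : g c = x := by rw [← hwbc]; exact hgcW
    -- the "values near x only near c" lemma
    have Q : ∀ γ, 0 < γ → γ < x - c → ∃ ρ > 0, ∀ z ∈ Icc c x, x - ρ < g z → z < c + γ := by
      intro γ hγ0 hγ
      have hle : c + γ ≤ x := by linarith
      obtain ⟨zb, hzbmem, hzbmax⟩ := isCompact_Icc.exists_isMaxOn (s := Icc (c+γ) x)
        ⟨x, ⟨hle, le_rfl⟩⟩ (hgcont.mono (Icc_subset_Icc (by linarith) le_rfl))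
      have hzbmem' : zb ∈ Icc c x := ⟨by linarith [hzbmem.1], hzbmem.2⟩
      have hMγx : g zb < x := by
        rcases lt_or_eq_of_le ((hgmaps hzbmem').2) with h | h
        · exact h
        · exfalso
          rcases eq_or_lt_of_le hzbmem.2 with hzx | hzx
          · exact hxp 1 le_rfl (by rw [← hzx] at h ⊢; simpa using h)
          · exact hpre zb ⟨by linarith [hzbmem.1], hzx⟩ 1 le_rfl (by simpa using h)
      refine ⟨x - g zb, by linarith, fun z hz hgz => ?_⟩
      by_contra hcon
      push_neg at hcon
      have : g z ≤ g zb := hzbmax ⟨hcon, hz.2⟩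
      linarith
    -- split: t k = 1 infinitely often, or t k ≥ 2 infinitely often
    have hsplit : {k | t k = 1}.Infinite ∨ {k | 2 ≤ t k}.Infinite := by
      by_contra hcon
      push_neg at hcon
      have : (Set.univ : Set ℕ).Finite := by
        refine Set.Finite.subset (hcon.1.union hcon.2) (fun k _ => ?_)
        rcases eq_or_lt_of_le (ht k) with h | h
        · exact Or.inl h.symm
        · exact Or.inr h
      exact Set.infinite_univ this
    -- index extraction from an infinite set
    have hidx : ∀ S : Set ℕ, S.Infinite → ∃ κ : ℕ → ℕ, Tendsto κ atTop atTop ∧ ∀ j, κ j ∈ S := by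
      intro S hS
      choose κ hκS hκgt using fun j => hS.exists_gt j
      exact ⟨κ, tendsto_atTop_mono (fun j => (hκgt j).le) tendsto_id, hκS⟩
    have hξmem : ξ ∈ Icc c x := isClosed_Icc.mem_of_tendsto hwξ (Eventually.of_forall hw)
    have hδ0 : ∀ k, 0 < δ k := by
      intro k; have := hv k; have h1 := this.1; have h2 := this.2; linarith
    -- limit of g along a subsequence-of-w argument (used in t=1 case)
    rcases hsplit with hS | hS
    · -- t = 1 infinitely often
      obtain ⟨κ, hκtop, hκS⟩ := hidx _ hS
      have hδκ : Tendsto (δ ∘ κ) atTop (𝓝 0) := hδ.comp hκtop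
      have hwκ : Tendsto (w ∘ κ) atTop (𝓝 ξ) := hwξ.comp hκtop
      have hgval : ∀ j, g ((w ∘ κ) j) ∈ Ioo (x - δ (κ j)) x := by
        intro j
        have := hv (κ j)
        rw [hκS j] at this
        simpa using this
      have hgtend : Tendsto (fun j => g ((w ∘ κ) j)) atTop (𝓝 x) := by
        have hlow : Tendsto (fun j => x - δ (κ j)) atTop (𝓝 x) := by
          have := hδκ.const_sub x
          simpa using this
        exact tendsto_of_tendsto_of_tendsto_of_le_of_le hlow tendsto_const_nhds
          (fun j => (hgval j).1.le) (fun j => (hgval j).2.le)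
      have hgξ : Tendsto (fun j => g ((w ∘ κ) j)) atTop (𝓝 (g ξ)) := by
        have hcwa : ContinuousWithinAt g (Icc c x) ξ := hgcont ξ hξmem
        exact hcwa.tendsto.comp (tendsto_nhdsWithin_iff.mpr
          ⟨hwκ, Eventually.of_forall (fun j => hw (κ j))⟩)
      have hgξx : g ξ = x := tendsto_nhds_unique hgξ hgtend
      rcases hclass ξ hξmem with h | h | h
      · exact hξc hgc h
      · exact hpre ξ h 1 le_rfl (by simpa using hgξx)
      · exact hxp 1 le_rfl (by rw [h] at hgξx; simpa using hgξx)
    · -- t ≥ 2 infinitely often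
      obtain ⟨κ, hκtop, hκS⟩ := hidx _ hS
      have hδκ : Tendsto (δ ∘ κ) atTop (𝓝 0) := hδ.comp hκtop
      set q : ℕ → ℝ := fun j => g^[t (κ j) - 1] (w (κ j)) with hqdef
      set q' : ℕ → ℝ := fun j => g^[t (κ j) - 2] (w (κ j)) with hq'def
      have hqmem : ∀ j, q j ∈ Icc c x := fun j => hiter _ _ (hw (κ j))
      have hq'mem : ∀ j, q' j ∈ Icc c x := fun j => hiter _ _ (hw (κ j))
      have hgq : ∀ j, g (q j) = g^[t (κ j)] (w (κ j)) := by
        intro j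
        rw [hqdef]
        simp only
        rw [← Function.iterate_succ_apply' g]
        congr 1
        have := ht (κ j)
        omega
      have hgq' : ∀ j, g (q' j) = q j := by
        intro j
        rw [hqdef, hq'def]
        simp only
        rw [← Function.iterate_succ_apply' g]
        congr 1
        have := hκS j
        simp only [Set.mem_setOf_eq] at this
        omega
      -- q j → c
      have hqc : Tendsto q atTop (𝓝 c) := by
        rw [Metric.tendsto_atTop]
        intro γ' hγ'
        set γ := min (γ'/2) ((x - c)/2) with hγdef
        have hγ0 : 0 < γ := by
          apply lt_min (by linarith) (by linarith)
        have hγlt : γ < x - c := by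
          calc γ ≤ (x - c)/2 := min_le_right _ _
          _ < x - c := by linarith
        obtain ⟨ρ, hρ0, hρ⟩ := Q γ hγ0 hγlt
        have hev : ∀ᶠ j in atTop, δ (κ j) < ρ := hδκ.eventually_lt_const hρ0
        rw [eventually_atTop] at hev
        obtain ⟨N, hN⟩ := hev
        refine ⟨N, fun j hj => ?_⟩
        have h1 : g (q j) ∈ Ioo (x - δ (κ j)) x := by rw [hgq j]; exact hv (κ j)
        have h2 : x - ρ < g (q j) := by
          have := h1.1; have := hN j hj; linarith
        have h3 : q j < c + γ := hρ (q j) (hqmem j) h2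
        have h4 : c ≤ q j := (hqmem j).1
        rw [Real.dist_eq, abs_lt]
        constructor <;> [linarith [hγ0]; linarith [min_le_left (γ'/2) ((x-c)/2)]]
      -- extract convergent subsequence of q'
      obtain ⟨q'', hq''mem, φ, hφ, hq''⟩ := isCompact_Icc.tendsto_subseq hq'mem
      have hgq''tend : Tendsto (fun i => g (q' (φ i))) atTop (𝓝 (g q'')) := by
        have hcwa : ContinuousWithinAt g (Icc c x) q'' := hgcont q'' hq''mem
        exact hcwa.tendsto.comp (tendsto_nhdsWithin_iff.mpr
          ⟨hq'', Eventually.of_forall (fun i => hq'mem (φ i))⟩)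
      have hgq''c : g q'' = c := by
        have h2 : Tendsto (fun i => g (q' (φ i))) atTop (𝓝 c) := by
          have : (fun i => g (q' (φ i))) = q ∘ φ := by
            funext i; exact hgq' (φ i)
          rw [this]
          exact hqc.comp hφ.tendsto_atTop
        exact tendsto_nhds_unique hgq''tend h2
      have hg2 : g^[2] q'' = x := by
        show g (g (g^[0] q'')) = x
        simp [hgq''c, hgc]
      rcases hclass q'' hq''mem with h | h | h
      · rw [h] at hgq''c; rw [hgq''c] at hgc; linarith [hgc, hcx]
      · exact hpre q'' h 2 (by norm_num) hg2
      · rw [h] at hg2; exact hxp 2 (by norm_num) hg2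

private
lemma lemA (f : ℝ → ℝ) (hf : ContinuousOn f (Icc 0 1))
    (hmaps : MapsTo f (Icc 0 1) (Icc 0 1))
    (x : ℝ) (hx : x ∈ Icc (0:ℝ) 1) (ε : ℝ) (hε : 0 < ε)
    (hB : ∀ y ∈ Icc (0:ℝ) 1, ∀ n, 1 ≤ n → f^[n] y = x → ε ≤ |y - x|)
    (hW : ∀ δ > 0, ∃ n, 1 ≤ n ∧ ∃ u ∈ Icc (0:ℝ) 1, u ≠ x ∧ |u - x| < δ ∧
      f^[n] u ∈ Ioo (x - δ) x) : False := by
  -- basic facts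
  have hper : ∀ n, 1 ≤ n → f^[n] x ≠ x := by
    intro n hn h
    have := hB x hx n hn h
    simp at this
    linarith
  have hIcont : ∀ n, ContinuousOn (f^[n]) (Icc 0 1) := by
    intro n
    induction n with
    | zero => simpa using continuousOn_id
    | succ m ih =>
      rw [Function.iterate_succ]
      exact ih.comp hf hmaps
  have hImaps : ∀ n, MapsTo (f^[n]) (Icc (0:ℝ) 1) (Icc (0:ℝ) 1) := fun n => hmaps.iterate n
  have hx0 : 0 < x := by
    obtain ⟨n, hn, u, hu01, hune, hud, huv⟩ := hW 1 one_pos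
    have := (hImaps n hu01).1
    linarith [huv.2]
  -- the set of preimages of x
  set Bset : Set ℝ := {s | s ∈ Icc (0:ℝ) 1 ∧ ∃ n, 1 ≤ n ∧ f^[n] s = x} with hBdef
  set cset : Set ℝ := {0} ∪ {s | s ∈ Bset ∧ s < x} with hcsetdef
  have hcne : cset.Nonempty := ⟨0, Or.inl rfl⟩
  have hcbdd : BddAbove cset := by
    refine ⟨x, fun y hy => ?_⟩
    rcases hy with h | h
    · simp at h; linarith
    · exact h.2.le
  set c : ℝ := sSup cset with hcdef
  have hc0 : 0 ≤ c := le_csSup hcbdd (Or.inl rfl)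
  have hcx : c < x := by
    have hub : ∀ y ∈ cset, y ≤ max 0 (x - ε) := by
      intro y hy
      rcases hy with h | h
      · simp at h; simp [h]
      · have h2 := hB y h.1.1 _ (h.1.2.choose_spec.1) (h.1.2.choose_spec.2)
        have h3 : ε ≤ x - y := by
          rw [abs_sub_comm] at h2
          rcases abs_cases (x - y) with ⟨he, _⟩ | ⟨he, _⟩
          · linarith [h2, he]
          · linarith [h.2, h2, he]
        exact le_max_of_le_right (by linarith)
    have := csSup_le hcne hub
    have hmax : max 0 (x - ε) < x := by
      rcases max_cases 0 (x - ε) with ⟨h, _⟩ | ⟨h, _⟩ <;> rw [h] <;> linarith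
    linarith
  have hcb : ∀ s ∈ Bset, s < x → s ≤ c := fun s hs hsx => le_csSup hcbdd (Or.inr ⟨hs, hsx⟩)
  have hcE : ∀ z, z < c → ∃ b ∈ cset, z < b := fun z hz => exists_lt_of_lt_csSup hcne hz
  have hsubI : Icc c x ⊆ Icc (0:ℝ) 1 := Icc_subset_Icc hc0 hx.2
  -- preimages in [c,x] only at c
  have P1 : ∀ z ∈ Icc c x, ∀ m, 1 ≤ m → f^[m] z = x → z = c := by
    intro z hz m hm hzx
    rcases eq_or_lt_of_le hz.2 with h | h
    · exact absurd (h ▸ hzx) (hper m hm)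
    · exact le_antisymm (hcb z ⟨hsubI hz, m, hm, hzx⟩ h) hz.1
  -- IVT helper
  have hIVT : ∀ (n : ℕ) (a b y : ℝ), a ∈ Icc (0:ℝ) 1 → b ∈ Icc (0:ℝ) 1 →
      ((f^[n] a < y ∧ y < f^[n] b) ∨ (f^[n] b < y ∧ y < f^[n] a)) →
      ∃ z, ((a < z ∧ z < b) ∨ (b < z ∧ z < a)) ∧ f^[n] z = y := by
    intro n a b y ha hb hy
    have hab : a ≠ b := by
      rintro rfl
      rcases hy with ⟨h1, h2⟩ | ⟨h1, h2⟩ <;> linarith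
    rcases lt_or_gt_of_ne hab with hlt | hlt
    · have hcont : ContinuousOn (f^[n]) (Icc a b) :=
        (hIcont n).mono (Icc_subset_Icc ha.1 hb.2)
      rcases hy with h | h
      · obtain ⟨z, hz, hzy⟩ := intermediate_value_Ioo hlt.le hcont h
        exact ⟨z, Or.inl ⟨hz.1, hz.2⟩, hzy⟩
      · obtain ⟨z, hz, hzy⟩ := intermediate_value_Ioo' hlt.le hcont h
        exact ⟨z, Or.inl ⟨hz.1, hz.2⟩, hzy⟩
    · have hcont : ContinuousOn (f^[n]) (Icc b a) :=
        (hIcont n).mono (Icc_subset_Icc hb.1 ha.2)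
      rcases hy with h | h
      · obtain ⟨z, hz, hzy⟩ := intermediate_value_Ioo' hlt.le hcont ⟨h.1, h.2⟩
        exact ⟨z, Or.inr ⟨hz.1, hz.2⟩, hzy⟩
      · obtain ⟨z, hz, hzy⟩ := intermediate_value_Ioo hlt.le hcont ⟨h.1, h.2⟩
        exact ⟨z, Or.inr ⟨hz.1, hz.2⟩, hzy⟩
  -- invariance of [c, x] under return-times
  have U1 : ∀ n, 1 ≤ n → ∀ u, u ∈ Ioo c x → f^[n] u ∈ Ioo c x →
      MapsTo (f^[n]) (Icc c x) (Icc c x) := by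
    intro n hn u hu huv z hz
    have hu01 : u ∈ Icc (0:ℝ) 1 := hsubI ⟨hu.1.le, hu.2.le⟩
    have hz01 : z ∈ Icc (0:ℝ) 1 := hsubI hz
    constructor
    · -- c ≤ f^[n] z
      by_contra hcon
      push_neg at hcon
      obtain ⟨b, hbmem, hbgt⟩ := hcE _ hcon
      rcases hbmem with hb0 | ⟨hbB, hbx⟩
      · simp only [Set.mem_singleton_iff] at hb0
        subst hb0
        exact absurd (hImaps n hz01).1 (by linarith)
      · have hbc : b ≤ c := hcb b hbB hbx
        have hblt : b < f^[n] u := lt_of_le_of_lt hbc huv.1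
        obtain ⟨z', hz', hz'b⟩ := hIVT n z u b hz01 hu01 (Or.inl ⟨hbgt, hblt⟩)
        have hz'mem : z' ∈ Ioo c x := by
          rcases hz' with ⟨h1, h2⟩ | ⟨h1, h2⟩
          · exact ⟨lt_of_le_of_lt hz.1 h1, lt_trans h2 hu.2⟩
          · exact ⟨lt_trans hu.1 h1, lt_of_lt_of_le h2 hz.2⟩
        obtain ⟨j, hj1, hjb⟩ := hbB.2
        have hz'x : f^[j + n] z' = x := by
          rw [Function.iterate_add_apply, hz'b, hjb]
        have := P1 z' ⟨hz'mem.1.le, hz'mem.2.le⟩ (j + n) (by omega) hz'x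
        linarith [hz'mem.1]
    · -- f^[n] z ≤ x
      by_contra hcon
      push_neg at hcon
      obtain ⟨z', hz', hz'x⟩ := hIVT n u z x hu01 hz01 (Or.inl ⟨huv.2, hcon⟩)
      have hz'mem : z' ∈ Ioo c x := by
        rcases hz' with ⟨h1, h2⟩ | ⟨h1, h2⟩
        · exact ⟨lt_trans hu.1 h1, lt_of_lt_of_le h2 hz.2⟩
        · exact ⟨lt_of_le_of_lt hz.1 h1, lt_trans h2 hu.2⟩
      have := P1 z' ⟨hz'mem.1.le, hz'mem.2.le⟩ n hn hz'x
      linarith [hz'mem.1]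
  -- continuity trick at c
  have hc01 : c ∈ Icc (0:ℝ) 1 := ⟨hc0, le_trans hcx.le hx.2⟩
  have CT : ∀ m, 1 ≤ m → f^[m] c ∈ Ioo c x → ∃ z ∈ Ioo c x, f^[m] z ∈ Ioo c x := by
    intro m _ hmc
    have hcwa : ContinuousWithinAt (f^[m]) (Icc 0 1) c := (hIcont m) c hc01
    have hev : ∀ᶠ z in 𝓝[Icc (0:ℝ) 1] c, f^[m] z ∈ Ioo c x :=
      hcwa.tendsto.eventually (isOpen_Ioo.eventually_mem hmc)
    obtain ⟨η, hη0, hη⟩ := Metric.mem_nhdsWithin_iff.mp hev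
    set z : ℝ := c + min η (x - c) / 2 with hzdef
    have hmin0 : 0 < min η (x - c) := lt_min hη0 (by linarith)
    have hzc : c < z := by rw [hzdef]; linarith
    have hzX : z < x := by
      have : min η (x - c) ≤ x - c := min_le_right _ _
      rw [hzdef]; linarith
    have hz01 : z ∈ Icc (0:ℝ) 1 := ⟨by linarith, by linarith [hx.2]⟩
    have hzball : z ∈ Metric.ball c η := by
      rw [Metric.mem_ball, Real.dist_eq, hzdef]
      have : min η (x - c) ≤ η := min_le_left _ _
      rw [abs_of_pos (by linarith : (0:ℝ) < c + min η (x - c) / 2 - c)]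
      linarith
    exact ⟨z, ⟨hzc, hzX⟩, hη ⟨hzball, hz01⟩⟩
  -- the set of return times
  set T : Set ℕ := {n | 1 ≤ n ∧ ∃ u, u ∈ Ioo c x ∧ f^[n] u ∈ Ioo c x} with hTdef
  have hIooI : Ioo c x ⊆ Icc (0:ℝ) 1 := fun z hz => hsubI ⟨hz.1.le, hz.2.le⟩
  -- difference closure
  have DIF : ∀ n ∈ T, ∀ n' ∈ T, n < n' → (n' - n) ∈ T := by
    intro n hn n' hn' hlt
    obtain ⟨hn1, u, hu, huv⟩ := hn
    obtain ⟨hn'1, u', hu', hu'v⟩ := hn'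
    have hmaps_n := U1 n hn1 u hu huv
    have hz0 : f^[n] u' ∈ Icc c x := hmaps_n ⟨hu'.1.le, hu'.2.le⟩
    have hiterate : f^[n' - n] (f^[n] u') = f^[n'] u' := by
      rw [← Function.iterate_add_apply]
      congr 1
      omega
    rcases eq_or_lt_of_le hz0.2 with hx_eq | hlt2
    · exfalso
      have := P1 u' ⟨hu'.1.le, hu'.2.le⟩ n hn1 hx_eq
      linarith [hu.1, hu'.1]
    rcases eq_or_lt_of_le hz0.1 with hc_eq | hgt2
    · -- f^[n] u' = c : use continuity trick
      have hfc : f^[n' - n] c ∈ Ioo c x := by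
        have heq : f^[n' - n] c = f^[n'] u' := by rw [hc_eq]; exact hiterate
        rw [heq]; exact hu'v
      obtain ⟨z, hz, hzv⟩ := CT (n' - n) (by omega) hfc
      exact ⟨by omega, z, hz, hzv⟩
    · exact ⟨by omega, f^[n] u', ⟨hgt2, hlt2⟩, by rw [hiterate]; exact hu'v⟩
  -- pigeonhole: witnesses with bounded times at all scales force periodicity
  have PIG : ∀ (N : ℕ) (mm : ℕ → ℕ) (y : ℕ → ℝ) (σ : ℕ → ℝ),
      (∀ j, 1 ≤ mm j) → (∀ j, mm j ≤ N) → (∀ j, y j ∈ Icc (0:ℝ) 1) →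
      (∀ j, |y j - x| < σ j) → (∀ j, |f^[mm j] (y j) - x| < σ j) →
      Tendsto σ atTop (𝓝 0) → False := by
    intro N mm y σ hm1 hmN hy01 hyx hfyx hσ
    obtain ⟨val, hval⟩ := Finite.exists_infinite_fiber
      (fun j => (⟨mm j, Nat.lt_succ_of_le (hmN j)⟩ : Fin (N+1)))
    have hS : ((fun j => (⟨mm j, Nat.lt_succ_of_le (hmN j)⟩ : Fin (N+1))) ⁻¹' {val}).Infinite :=
      Set.infinite_coe_iff.mp hval
    choose κ hκS hκgt using fun j => hS.exists_gt j
    have hκtop : Tendsto κ atTop atTop := tendsto_atTop_mono (fun j => (hκgt j).le) tendsto_id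
    have hmval : ∀ j, mm (κ j) = val.val := by
      intro j
      have := hκS j
      simp only [Set.mem_preimage, Set.mem_singleton_iff] at this
      exact congrArg Fin.val this
    have hσκ : Tendsto (σ ∘ κ) atTop (𝓝 0) := hσ.comp hκtop
    have hyx' : Tendsto (fun j => y (κ j)) atTop (𝓝 x) := by
      rw [tendsto_iff_dist_tendsto_zero]
      exact squeeze_zero (fun j => dist_nonneg)
        (fun j => by rw [Real.dist_eq]; exact (hyx (κ j)).le) hσκ
    have hfyx' : Tendsto (fun j => f^[val.val] (y (κ j))) atTop (𝓝 x) := by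
      rw [tendsto_iff_dist_tendsto_zero]
      refine squeeze_zero (fun j => dist_nonneg) (fun j => ?_) hσκ
      rw [Real.dist_eq, ← hmval j]
      exact (hfyx (κ j)).le
    have hcont : Tendsto (fun j => f^[val.val] (y (κ j))) atTop (𝓝 (f^[val.val] x)) :=
      ((hIcont val.val) x hx).tendsto.comp (tendsto_nhdsWithin_iff.mpr
        ⟨hyx', Eventually.of_forall (fun j => hy01 (κ j))⟩)
    have hval1 : 1 ≤ val.val := by rw [← hmval 0]; exact hm1 (κ 0)
    exact hper val.val hval1 (tendsto_nhds_unique hcont hfyx')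
  -- geometric scales helper
  have hGeo : ∀ a : ℝ, 0 < a → Tendsto (fun k : ℕ => a / 2 ^ (k+1)) atTop (𝓝 0) := by
    intro a ha
    have h2 : Tendsto (fun k : ℕ => ((1:ℝ)/2) ^ k) atTop (𝓝 0) :=
      tendsto_pow_atTop_nhds_zero_of_lt_one (by norm_num) (by norm_num)
    have := h2.const_mul (a/2)
    rw [mul_zero] at this
    refine this.congr (fun k => ?_)
    rw [div_pow, one_pow, pow_succ]
    ring
  -- THE STREAM construction
  have STREAM : ∃ n₁, 1 ≤ n₁ ∧ f^[n₁] x ∈ Icc c x ∧ ∃ nn : ℕ → ℕ, ∃ u : ℕ → ℝ, ∃ δs : ℕ → ℝ,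
      Tendsto δs atTop (𝓝 0) ∧ ∀ k, 0 < δs k ∧ δs k ≤ ε ∧ δs k ≤ (x - c)/2 ∧
        u k ∈ Icc (0:ℝ) 1 ∧ |u k - x| < δs k ∧ n₁ < nn k ∧
        f^[nn k] (u k) ∈ Ioo (x - δs k) x ∧ f^[n₁] (u k) ∈ Icc c x := by
    classical
    have hpow1 : ∀ k : ℕ, (1:ℝ) ≤ 2^(k+1) := by
      intro k
      calc (1:ℝ) ≤ 2^1 := by norm_num
      _ ≤ 2^(k+1) := pow_le_pow_right₀ (by norm_num) (by omega)
    have hpow2 : ∀ k : ℕ, (2:ℝ) ≤ 2^(k+1) := by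
      intro k
      calc (2:ℝ) = 2^1 := by norm_num
      _ ≤ 2^(k+1) := pow_le_pow_right₀ (by norm_num) (by omega)
    set Lw : ℝ → Prop := fun δ => ∃ n, 1 ≤ n ∧ ∃ uu, uu ∈ Icc (0:ℝ) 1 ∧
      uu ∈ Ioo (x - δ) x ∧ f^[n] uu ∈ Ioo (x - δ) x with hLwdef
    set Rw : ℝ → Prop := fun δ => ∃ n, 1 ≤ n ∧ ∃ uu, uu ∈ Icc (0:ℝ) 1 ∧
      uu ∈ Ioo x (x + δ) ∧ f^[n] uu ∈ Ioo (x - δ) x with hRwdef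
    have hLR : ∀ δ, 0 < δ → Lw δ ∨ Rw δ := by
      intro δ hδ
      obtain ⟨n, hn, uu, h01, hne, hd, hv⟩ := hW δ hδ
      have had := abs_lt.mp hd
      rcases lt_or_gt_of_ne hne with h | h
      · exact Or.inl ⟨n, hn, uu, h01, ⟨by linarith [had.1], h⟩, hv⟩
      · exact Or.inr ⟨n, hn, uu, h01, ⟨h, by linarith [had.2]⟩, hv⟩
    by_cases hCL : ∀ δ, 0 < δ → Lw δ
    · -- LEFT branch : witnesses from the left
      set δb := min ε ((x - c)/2) with hδbdef
      have hδb0 : 0 < δb := lt_min hε (by linarith)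
      have hδbε : δb ≤ ε := min_le_left _ _
      have hδbc : δb ≤ (x - c)/2 := min_le_right _ _
      have hsubL : ∀ δ, δ ≤ δb → Ioo (x - δ) x ⊆ Ioo c x := by
        intro δ hδle z hz
        exact ⟨by linarith [hz.1], hz.2⟩
      obtain ⟨n₁, hn₁, u₁, hu₁01, hu₁, hu₁v⟩ := hCL δb hδb0
      have hn₁maps : MapsTo (f^[n₁]) (Icc c x) (Icc c x) :=
        U1 n₁ hn₁ u₁ (hsubL δb le_rfl hu₁) (hsubL δb le_rfl hu₁v)
      have hWgt : ∀ σ, 0 < σ → ∃ n, n₁ < n ∧ ∃ uu, uu ∈ Icc (0:ℝ) 1 ∧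
          uu ∈ Ioo (x - min σ δb) x ∧ f^[n] uu ∈ Ioo (x - min σ δb) x := by
        intro σ hσ
        by_contra hcon
        push_neg at hcon
        set σ0 := min σ δb with hσ0def
        have hσ00 : 0 < σ0 := lt_min hσ hδb0
        have hwit : ∀ j : ℕ, ∃ nj, 1 ≤ nj ∧ nj ≤ n₁ ∧ ∃ yy, yy ∈ Icc (0:ℝ) 1 ∧
            yy ∈ Ioo (x - σ0/2^(j+1)) x ∧ f^[nj] yy ∈ Ioo (x - σ0/2^(j+1)) x := by
          intro j
          have hσj : 0 < σ0/2^(j+1) := by positivity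
          obtain ⟨nj, hnj, yy, hy01, hy, hyv⟩ := hCL _ hσj
          have hsc : σ0/2^(j+1) ≤ σ0 := div_le_self hσ00.le (hpow1 j)
          have hmono : Ioo (x - σ0/2^(j+1)) x ⊆ Ioo (x - σ0) x := by
            intro z hz
            exact ⟨by linarith [hz.1], hz.2⟩
          rcases le_or_gt nj n₁ with hle | hgt
          · exact ⟨nj, hnj, hle, yy, hy01, hy, hyv⟩
          · exact absurd (hmono hyv) (hcon nj hgt yy hy01 (hmono hy))
        choose mjf hm1f hmNf yf hy01f hyf hyvf using hwit
        refine PIG n₁ mjf yf (fun j => σ0/2^(j+1)) hm1f hmNf hy01f ?_ ?_ (hGeo σ0 hσ00)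
        · intro j
          show |yf j - x| < σ0 / 2 ^ (j + 1)
          have h1 := (hyf j).1
          have h2 := (hyf j).2
          have hσj : (0:ℝ) < σ0 / 2 ^ (j + 1) := div_pos hσ00 (by positivity)
          rw [abs_lt]
          exact ⟨by linarith, by linarith⟩
        · intro j
          show |f^[mjf j] (yf j) - x| < σ0 / 2 ^ (j + 1)
          have h1 := (hyvf j).1
          have h2 := (hyvf j).2
          have hσj : (0:ℝ) < σ0 / 2 ^ (j + 1) := div_pos hσ00 (by positivity)
          rw [abs_lt]
          exact ⟨by linarith, by linarith⟩
      have hstep : ∀ k : ℕ, ∃ nk, n₁ < nk ∧ ∃ uu, uu ∈ Icc (0:ℝ) 1 ∧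
          uu ∈ Ioo (x - min ((x-c)/2^(k+1)) δb) x ∧
          f^[nk] uu ∈ Ioo (x - min ((x-c)/2^(k+1)) δb) x := by
        intro k
        exact hWgt ((x-c)/2^(k+1)) (div_pos (by linarith) (by positivity))
      choose nn hnngt u hu01 huIoo huv using hstep
      refine ⟨n₁, hn₁, hn₁maps ⟨hcx.le, le_rfl⟩, nn, u,
        (fun k => min ((x-c)/2^(k+1)) δb), ?_, ?_⟩
      · refine squeeze_zero (fun k => ?_) (fun k => min_le_left _ _) (hGeo (x-c) (by linarith))
        exact le_min (div_pos (by linarith) (by positivity)).le hδb0.le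
      · intro k
        have hmin0 : 0 < min ((x-c)/2^(k+1)) δb :=
          lt_min (div_pos (by linarith) (by positivity)) hδb0
        have hminb : min ((x-c)/2^(k+1)) δb ≤ δb := min_le_right _ _
        have hminc : min ((x-c)/2^(k+1)) δb ≤ (x-c)/2 := le_trans hminb hδbc
        refine ⟨hmin0, le_trans hminb hδbε, hminc, hu01 k, ?_, hnngt k, huv k, ?_⟩
        · have := huIoo k
          rw [abs_lt]
          constructor <;> [linarith [this.1]; linarith [this.2, hmin0]]
        · have hsub2 : Ioo (x - min ((x-c)/2^(k+1)) δb) x ⊆ Ioo c x := hsubL _ hminb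
          exact hn₁maps (Ioo_subset_Icc_self (hsub2 (huIoo k)))
    · -- RIGHT branch : witnesses from the right
      push_neg at hCL
      obtain ⟨σs, hσs0, hnL⟩ := hCL
      have hR : ∀ δ, 0 < δ → δ ≤ σs → Rw δ := by
        intro δ h0 hle
        rcases hLR δ h0 with h | h
        · exfalso
          apply hnL
          obtain ⟨n, hn, uu, h01, hIoo, hv⟩ := h
          exact ⟨n, hn, uu, h01, ⟨by linarith [hIoo.1], hIoo.2⟩,
            ⟨by linarith [hv.1], hv.2⟩⟩
        · exact h
      have hx1 : x < 1 := by
        obtain ⟨n, hn, uu, h01, hIoo, hv⟩ :=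
          hR (min σs 1) (lt_min hσs0 one_pos) (min_le_left _ _)
        exact lt_of_lt_of_le hIoo.1 h01.2
      set tset : Set ℝ := {1} ∪ {s | s ∈ Bset ∧ x < s} with htsetdef
      have htne : tset.Nonempty := ⟨1, Or.inl rfl⟩
      have htbdd : BddBelow tset := by
        refine ⟨0, fun y hy => ?_⟩
        rcases hy with h | h
        · simp only [Set.mem_singleton_iff] at h
          simp [h]
        · exact h.1.1.1
      set tstar : ℝ := sInf tset with htstardef
      have htlb : ∀ y ∈ tset, min 1 (x + ε) ≤ y := by
        intro y hy
        rcases hy with h | h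
        · simp only [Set.mem_singleton_iff] at h
          subst h
          exact min_le_left _ _
        · obtain ⟨nq, hnq, heq⟩ := h.1.2
          have h2 := hB y h.1.1 nq hnq heq
          have h3 : ε ≤ y - x := by
            rcases abs_cases (y - x) with ⟨he, _⟩ | ⟨he, _⟩ <;> [linarith; linarith [h.2]]
          exact le_trans (min_le_right _ _) (by linarith)
      have htstargt : x < tstar := by
        have h1 := le_csInf htne htlb
        rcases min_cases 1 (x + ε) with ⟨he, _⟩ | ⟨he, _⟩ <;> rw [he] at h1 <;> linarith
      have htle1 : tstar ≤ 1 := csInf_le htbdd (Or.inl rfl)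
      have htb : ∀ s ∈ Bset, x < s → tstar ≤ s := fun s hs h => csInf_le htbdd (Or.inr ⟨hs, h⟩)
      have hsubIR : Icc x tstar ⊆ Icc (0:ℝ) 1 := fun z hz =>
        ⟨le_trans hx.1 hz.1, le_trans hz.2 htle1⟩
      have P1R : ∀ z ∈ Icc x tstar, ∀ mq, 1 ≤ mq → f^[mq] z = x → z = tstar := by
        intro z hz mq hmq hzx
        rcases eq_or_lt_of_le hz.1 with h | h
        · exfalso
          rw [← h] at hzx
          exact hper mq hmq hzx
        · exact le_antisymm hz.2 (htb z ⟨hsubIR hz, mq, hmq, hzx⟩ h)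
      have U1R : ∀ n, 1 ≤ n → ∀ uu, uu ∈ Ioo x tstar → f^[n] uu ∈ Ioo c x →
          MapsTo (f^[n]) (Icc x tstar) (Icc c x) := by
        intro n hn uu huu huuv z hz
        have hu01 : uu ∈ Icc (0:ℝ) 1 := hsubIR ⟨huu.1.le, huu.2.le⟩
        have hz01 : z ∈ Icc (0:ℝ) 1 := hsubIR hz
        constructor
        · by_contra hcon
          push_neg at hcon
          obtain ⟨b, hbmem, hbgt⟩ := hcE _ hcon
          rcases hbmem with hb0 | ⟨hbB, hbx⟩
          · simp only [Set.mem_singleton_iff] at hb0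
            subst hb0
            exact absurd (hImaps n hz01).1 (by linarith)
          · have hblt : b < f^[n] uu := lt_of_le_of_lt (hcb b hbB hbx) huuv.1
            obtain ⟨z', hz', hz'b⟩ := hIVT n z uu b hz01 hu01 (Or.inl ⟨hbgt, hblt⟩)
            have hz'mem : z' ∈ Ioo x tstar := by
              rcases hz' with ⟨h1, h2⟩ | ⟨h1, h2⟩
              · exact ⟨lt_of_le_of_lt hz.1 h1, lt_trans h2 huu.2⟩
              · exact ⟨lt_trans huu.1 h1, lt_of_lt_of_le h2 hz.2⟩
            obtain ⟨j, hj1, hjb⟩ := hbB.2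
            have hz'x : f^[j + n] z' = x := by
              rw [Function.iterate_add_apply, hz'b, hjb]
            have := P1R z' ⟨hz'mem.1.le, hz'mem.2.le⟩ (j + n) (by omega) hz'x
            linarith [hz'mem.2]
        · by_contra hcon
          push_neg at hcon
          obtain ⟨z', hz', hz'x⟩ := hIVT n uu z x hu01 hz01 (Or.inl ⟨huuv.2, hcon⟩)
          have hz'mem : z' ∈ Ioo x tstar := by
            rcases hz' with ⟨h1, h2⟩ | ⟨h1, h2⟩
            · exact ⟨lt_trans huu.1 h1, lt_of_lt_of_le h2 hz.2⟩
            · exact ⟨lt_of_le_of_lt hz.1 h1, lt_trans h2 huu.2⟩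
          have := P1R z' ⟨hz'mem.1.le, hz'mem.2.le⟩ n hn hz'x
          linarith [hz'mem.2]
      set δt : ℝ := min (min σs ε) (min ((x - c)/2) ((tstar - x)/2)) with hδtdef
      have hδt0 : 0 < δt :=
        lt_min (lt_min hσs0 hε) (lt_min (by linarith) (by linarith))
      have hδtσ : δt ≤ σs := le_trans (min_le_left _ _) (min_le_left _ _)
      have hδtε : δt ≤ ε := le_trans (min_le_left _ _) (min_le_right _ _)
      have hδtc : δt ≤ (x - c)/2 := le_trans (min_le_right _ _) (min_le_left _ _)
      have hδtt : δt ≤ (tstar - x)/2 := le_trans (min_le_right _ _) (min_le_right _ _)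
      obtain ⟨n₁, hn₁, u₁, hu₁01, hu₁, hu₁v⟩ := hR δt hδt0 hδtσ
      have hu₁' : u₁ ∈ Ioo x tstar := ⟨hu₁.1, by linarith [hu₁.2]⟩
      have hu₁v' : f^[n₁] u₁ ∈ Ioo c x := ⟨by linarith [hu₁v.1], hu₁v.2⟩
      have hψ : MapsTo (f^[n₁]) (Icc x tstar) (Icc c x) := U1R n₁ hn₁ u₁ hu₁' hu₁v'
      have hWgt : ∀ σ, 0 < σ → ∃ n, n₁ < n ∧ ∃ uu, uu ∈ Icc (0:ℝ) 1 ∧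
          uu ∈ Ioo x (x + min σ δt) ∧ f^[n] uu ∈ Ioo (x - min σ δt) x := by
        intro σ hσ
        by_contra hcon
        push_neg at hcon
        set σ0 := min σ δt with hσ0def
        have hσ00 : 0 < σ0 := lt_min hσ hδt0
        have hwit : ∀ j : ℕ, ∃ nj, 1 ≤ nj ∧ nj ≤ n₁ ∧ ∃ yy, yy ∈ Icc (0:ℝ) 1 ∧
            yy ∈ Ioo x (x + σ0/2^(j+1)) ∧ f^[nj] yy ∈ Ioo (x - σ0/2^(j+1)) x := by
          intro j
          have hσj : 0 < σ0/2^(j+1) := by positivity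
          have hsc : σ0/2^(j+1) ≤ σ0 := div_le_self hσ00.le (hpow1 j)
          obtain ⟨nj, hnj, yy, hy01, hy, hyv⟩ := hR _ hσj (by
            calc σ0/2^(j+1) ≤ σ0 := hsc
            _ ≤ δt := min_le_right _ _
            _ ≤ σs := hδtσ)
          rcases le_or_gt nj n₁ with hle | hgt
          · exact ⟨nj, hnj, hle, yy, hy01, hy, hyv⟩
          · refine absurd ?_ (hcon nj hgt yy hy01 ⟨hy.1, by linarith [hy.2]⟩)
            exact ⟨by linarith [hyv.1], hyv.2⟩
        choose mjf hm1f hmNf yf hy01f hyf hyvf using hwit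
        refine PIG n₁ mjf yf (fun j => σ0/2^(j+1)) hm1f hmNf hy01f ?_ ?_ (hGeo σ0 hσ00)
        · intro j
          show |yf j - x| < σ0 / 2 ^ (j + 1)
          have h1 := (hyf j).1
          have h2 := (hyf j).2
          have hσj : (0:ℝ) < σ0 / 2 ^ (j + 1) := div_pos hσ00 (by positivity)
          rw [abs_lt]
          exact ⟨by linarith, by linarith⟩
        · intro j
          show |f^[mjf j] (yf j) - x| < σ0 / 2 ^ (j + 1)
          have h1 := (hyvf j).1
          have h2 := (hyvf j).2
          have hσj : (0:ℝ) < σ0 / 2 ^ (j + 1) := div_pos hσ00 (by positivity)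
          rw [abs_lt]
          exact ⟨by linarith, by linarith⟩
      have hstep : ∀ k : ℕ, ∃ nk, n₁ < nk ∧ ∃ uu, uu ∈ Icc (0:ℝ) 1 ∧
          uu ∈ Ioo x (x + min ((x-c)/2^(k+1)) δt) ∧
          f^[nk] uu ∈ Ioo (x - min ((x-c)/2^(k+1)) δt) x := by
        intro k
        exact hWgt ((x-c)/2^(k+1)) (div_pos (by linarith) (by positivity))
      choose nn hnngt u hu01 huIoo huv using hstep
      refine ⟨n₁, hn₁, hψ ⟨le_rfl, htstargt.le⟩, nn, u,
        (fun k => min ((x-c)/2^(k+1)) δt), ?_, ?_⟩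
      · refine squeeze_zero (fun k => ?_) (fun k => min_le_left _ _) (hGeo (x-c) (by linarith))
        exact le_min (div_pos (by linarith) (by positivity)).le hδt0.le
      · intro k
        have hmin0 : 0 < min ((x-c)/2^(k+1)) δt :=
          lt_min (div_pos (by linarith) (by positivity)) hδt0
        have hminb : min ((x-c)/2^(k+1)) δt ≤ δt := min_le_right _ _
        refine ⟨hmin0, le_trans hminb hδtε, le_trans hminb hδtc, hu01 k, ?_, hnngt k, huv k, ?_⟩
        · have := huIoo k
          rw [abs_lt]
          constructor <;> [linarith [this.1, hmin0]; linarith [this.2]]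
        · have huIR : u k ∈ Icc x tstar := by
            have := huIoo k
            constructor
            · linarith [this.1]
            · have h2 : min ((x-c)/2^(k+1)) δt ≤ (tstar - x)/2 := le_trans hminb hδtt
              linarith [this.2]
          exact hψ huIR
  obtain ⟨n₁, hn₁, hξmem, nn, u, δs, hδtend, hstream⟩ := STREAM
  have hs1 : ∀ k, 0 < δs k := fun k => (hstream k).1
  have hs2 : ∀ k, δs k ≤ ε := fun k => (hstream k).2.1
  have hs3 : ∀ k, δs k ≤ (x - c)/2 := fun k => (hstream k).2.2.1
  have hs4 : ∀ k, u k ∈ Icc (0:ℝ) 1 := fun k => (hstream k).2.2.2.1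
  have hs5 : ∀ k, |u k - x| < δs k := fun k => (hstream k).2.2.2.2.1
  have hs6 : ∀ k, n₁ < nn k := fun k => (hstream k).2.2.2.2.2.1
  have hs7 : ∀ k, f^[nn k] (u k) ∈ Ioo (x - δs k) x := fun k => (hstream k).2.2.2.2.2.2.1
  have hs8 : ∀ k, f^[n₁] (u k) ∈ Icc c x := fun k => (hstream k).2.2.2.2.2.2.2
  -- common part
  set w : ℕ → ℝ := fun k => f^[n₁] (u k) with hwdef
  set m : ℕ → ℕ := fun k => nn k - n₁ with hmdef
  have hm1 : ∀ k, 1 ≤ m k := fun k => by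
    have := hs6 k
    simp only [hmdef]
    omega
  have hmw : ∀ k, f^[m k] (w k) = f^[nn k] (u k) := by
    intro k
    rw [hwdef]
    simp only
    rw [← Function.iterate_add_apply]
    congr 1
    have := hs6 k
    simp only [hmdef]
    omega
  have hIoosub : ∀ k, Ioo (x - δs k) x ⊆ Ioo c x := by
    intro k z hz
    have := hs3 k
    exact ⟨by linarith [hz.1], hz.2⟩
  have hwmem : ∀ k, w k ∈ Icc c x := fun k => hs8 k
  have hmT : ∀ k, m k ∈ T := by
    intro k
    have hvIoo : f^[m k] (w k) ∈ Ioo c x := by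
      rw [hmw k]
      exact hIoosub k (hs7 k)
    rcases eq_or_lt_of_le (hwmem k).1 with hceq | hcgt
    · rw [← hceq] at hvIoo
      obtain ⟨z, hz, hzv⟩ := CT (m k) (hm1 k) hvIoo
      exact ⟨hm1 k, z, hz, hzv⟩
    rcases eq_or_lt_of_le (hwmem k).2 with hxeq | hxlt
    · exfalso
      have hBx := hB (u k) (hs4 k) n₁ hn₁ hxeq
      have := hs5 k
      have := hs2 k
      linarith
    · exact ⟨hm1 k, w k, ⟨hcgt, hxlt⟩, hvIoo⟩
  -- minimal return time and divisibility
  set p : ℕ := sInf T with hpdef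
  have hpT : p ∈ T := Nat.sInf_mem ⟨m 0, hmT 0⟩
  have hp1 : 1 ≤ p := hpT.1
  have hdvd : ∀ n, n ∈ T → p ∣ n := by
    intro n
    induction n using Nat.strong_induction_on with
    | _ n ih =>
      intro hn
      rcases lt_trichotomy n p with h | h | h
      · exact absurd (Nat.sInf_le hn) (by omega)
      · exact h ▸ dvd_refl p
      · have h2 := DIF p hpT n hn h
        have h3 := ih (n - p) (by omega) h2
        have heq : n = (n - p) + p := by omega
        rw [heq]
        exact Nat.dvd_add h3 (dvd_refl p)
  obtain ⟨-, up, hup, hupv⟩ := hpT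
  have hgmaps : MapsTo (f^[p]) (Icc c x) (Icc c x) := U1 p hp1 up hup hupv
  have hgcont : ContinuousOn (f^[p]) (Icc c x) := (hIcont p).mono hsubI
  set t : ℕ → ℕ := fun k => m k / p with htdef
  have hpt : ∀ k, p * t k = m k := fun k => Nat.mul_div_cancel' (hdvd _ (hmT k))
  have ht1 : ∀ k, 1 ≤ t k := by
    intro k
    have h1 := hpt k
    have h2 := hm1 k
    by_contra hcon
    push_neg at hcon
    have h0 : t k = 0 := by omega
    rw [h0, mul_zero] at h1
    omega
  have hgt : ∀ k, (f^[p])^[t k] (w k) ∈ Ioo (x - δs k) x := by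
    intro k
    rw [← Function.iterate_mul, hpt k, hmw k]
    exact hs7 k
  have htendu : Tendsto u atTop (𝓝 x) := by
    rw [tendsto_iff_dist_tendsto_zero]
    exact squeeze_zero (fun k => dist_nonneg)
      (fun k => by rw [Real.dist_eq]; exact (hs5 k).le) hδtend
  have hwξ : Tendsto w atTop (𝓝 (f^[n₁] x)) :=
    ((hIcont n₁) x hx).tendsto.comp (tendsto_nhdsWithin_iff.mpr
      ⟨htendu, Eventually.of_forall (fun k => hs4 k)⟩)
  refine final_aux (f^[p]) c x hcx hgcont hgmaps ?_ ?_ δs hδtend w hwmem t ht1 hgt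
    (f^[n₁] x) hwξ ?_
  · intro z hz mq hmq heq
    rw [← Function.iterate_mul] at heq
    have := P1 z ⟨hz.1.le, hz.2.le⟩ (p * mq) (Nat.one_le_iff_ne_zero.mpr
      (Nat.mul_ne_zero (by omega) (by omega))) heq
    linarith [hz.1]
  · intro mq hmq heq
    rw [← Function.iterate_mul] at heq
    exact hper (p * mq) (Nat.one_le_iff_ne_zero.mpr
      (Nat.mul_ne_zero (by omega) (by omega))) heq
  · intro hgc hxic
    have : f^[p + n₁] x = x := by
      rw [Function.iterate_add_apply, hxic, hgc]
    exact hper (p + n₁) (by omega) this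

end proofs

section main
open Filter Topology

/-- The non-wandering set of `f` on `[0,1]` (relative topology). -/
def NonWandering (f : ℝ → ℝ) : Set ℝ :=
  {z ∈ Icc (0:ℝ) 1 | ∀ U : Set ℝ, IsOpen U → z ∈ U →
    ∃ n : ℕ, 0 < n ∧ (f^[n] '' (U ∩ Icc 0 1) ∩ U).Nonempty}

theorem stmt_18 (f : ℝ → ℝ) (hf : ContinuousOn f (Icc 0 1))
    (hmaps : MapsTo f (Icc 0 1) (Icc 0 1))
    (x : ℝ) (hx : x ∈ NonWandering f) :
    x ∈ closure (⋃ n ∈ {n : ℕ | 1 ≤ n}, {y ∈ Icc (0:ℝ) 1 | f^[n] y = x}) := by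
  obtain ⟨hx01, hnw⟩ := hx
  by_contra hcl
  rw [Metric.mem_closure_iff] at hcl
  push_neg at hcl
  obtain ⟨ε, hε, hB0⟩ := hcl
  have hB : ∀ y ∈ Icc (0:ℝ) 1, ∀ n, 1 ≤ n → f^[n] y = x → ε ≤ |y - x| := by
    intro y hy n hn heq
    have hmem : y ∈ ⋃ n ∈ {n : ℕ | 1 ≤ n}, {y ∈ Icc (0:ℝ) 1 | f^[n] y = x} := by
      simp only [Set.mem_iUnion, Set.mem_setOf_eq]
      exact ⟨n, hn, hy, heq⟩
    have := hB0 y hmem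
    rw [Real.dist_eq, abs_sub_comm] at this
    exact this
  have hper : ∀ n, 1 ≤ n → f^[n] x ≠ x := by
    intro n hn heq
    have := hB x hx01 n hn heq
    simp at this
    linarith
  have hIcont : ∀ n, ContinuousOn (f^[n]) (Icc 0 1) := by
    intro n
    induction n with
    | zero => simpa using continuousOn_id
    | succ m ih =>
      rw [Function.iterate_succ]
      exact ih.comp hf hmaps
  -- raw nonwandering witnesses with u ≠ x
  have hWraw : ∀ δ, 0 < δ → ∃ n, 1 ≤ n ∧ ∃ u ∈ Icc (0:ℝ) 1, u ≠ x ∧ |u - x| < δ ∧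
      (f^[n] u ∈ Ioo (x - δ) x ∨ f^[n] u ∈ Ioo x (x + δ)) := by
    intro δ hδ
    set δ' := min δ ε with hδ'def
    have hδ'0 : 0 < δ' := lt_min hδ hε
    have hδ'δ : δ' ≤ δ := min_le_left _ _
    have hδ'ε : δ' ≤ ε := min_le_right _ _
    obtain ⟨n, hn, y, hy⟩ := hnw (Ioo (x - δ') (x + δ')) isOpen_Ioo (by
      constructor <;> linarith)
    obtain ⟨⟨u, hu, huy⟩, hyU⟩ := hy
    have hu01 : u ∈ Icc (0:ℝ) 1 := hu.2
    have huδ : |u - x| < δ' := by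
      have := hu.1
      rw [abs_lt]
      exact ⟨by linarith [this.1], by linarith [this.2]⟩
    have hyne : y ≠ x := by
      intro heq
      rw [heq] at huy
      have := hB u hu01 n hn huy
      linarith [abs_lt.mpr (abs_lt.mp huδ)]
    have key : ∃ u' ∈ Icc (0:ℝ) 1, u' ≠ x ∧ |u' - x| < δ' ∧
        f^[n] u' ∈ Ioo (x - δ') (x + δ') ∧ f^[n] u' ≠ x := by
      by_cases hux : u = x
      · -- perturb around x using continuity
        have hV : IsOpen (Ioo (x - δ') (x + δ') ∩ {z | z ≠ x}) :=
          isOpen_Ioo.inter isOpen_ne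
        have hyV : f^[n] u ∈ Ioo (x - δ') (x + δ') ∩ {z | z ≠ x} := by
          rw [huy]; exact ⟨hyU, hyne⟩
        have hcwa := (hIcont n) u hu01
        have hev : ∀ᶠ z in 𝓝[Icc (0:ℝ) 1] u,
            f^[n] z ∈ Ioo (x - δ') (x + δ') ∩ {z | z ≠ x} :=
          hcwa.tendsto.eventually (hV.eventually_mem hyV)
        obtain ⟨η, hη0, hη⟩ := Metric.mem_nhdsWithin_iff.mp hev
        rw [hux] at hη
        rcases lt_or_eq_of_le hx01.2 with hxlt | hxeq
        · -- x < 1 : perturb to the right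
          set u' : ℝ := x + min (min η δ') (1 - x) / 2 with hu'def
          have hm0 : 0 < min (min η δ') (1 - x) := lt_min (lt_min hη0 hδ'0) (by linarith)
          have hu'x : x < u' := by rw [hu'def]; linarith
          have hu'1 : u' ≤ 1 := by
            have : min (min η δ') (1 - x) ≤ 1 - x := min_le_right _ _
            rw [hu'def]; linarith
          have hu'01 : u' ∈ Icc (0:ℝ) 1 := ⟨by linarith [hx01.1], hu'1⟩
          have hu'η : u' ∈ Metric.ball x η := by
            rw [Metric.mem_ball, Real.dist_eq]
            have h1 : min (min η δ') (1 - x) ≤ η := le_trans (min_le_left _ _) (min_le_left _ _)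
            rw [abs_of_pos (by linarith : (0:ℝ) < u' - x)]
            rw [hu'def]; linarith
          have := hη ⟨hu'η, hu'01⟩
          refine ⟨u', hu'01, ne_of_gt hu'x, ?_, this.1, this.2⟩
          have h1 : min (min η δ') (1 - x) ≤ δ' := le_trans (min_le_left _ _) (min_le_right _ _)
          rw [abs_of_pos (by linarith : (0:ℝ) < u' - x)]
          rw [hu'def]; linarith
        · -- x = 1 : perturb to the left
          have hx0' : 0 < x := by rw [hxeq]; norm_num
          set u' : ℝ := x - min (min η δ') x / 2 with hu'def
          have hm0 : 0 < min (min η δ') x := lt_min (lt_min hη0 hδ'0) hx0'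
          have hu'x : u' < x := by rw [hu'def]; linarith
          have hu'0 : 0 ≤ u' := by
            have : min (min η δ') x ≤ x := min_le_right _ _
            rw [hu'def]; linarith
          have hu'01 : u' ∈ Icc (0:ℝ) 1 := ⟨hu'0, by linarith [hx01.2]⟩
          have hu'η : u' ∈ Metric.ball x η := by
            rw [Metric.mem_ball, Real.dist_eq]
            have h1 : min (min η δ') x ≤ η := le_trans (min_le_left _ _) (min_le_left _ _)
            rw [abs_of_neg (by linarith : u' - x < 0)]
            rw [hu'def]; linarith
          have := hη ⟨hu'η, hu'01⟩
          refine ⟨u', hu'01, ne_of_lt hu'x, ?_, this.1, this.2⟩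
          have h1 : min (min η δ') x ≤ δ' := le_trans (min_le_left _ _) (min_le_right _ _)
          rw [abs_of_neg (by linarith : u' - x < 0)]
          rw [hu'def]; linarith
      · exact ⟨u, hu01, hux, huδ, by rw [huy]; exact hyU, by rw [huy]; exact hyne⟩
    obtain ⟨u', hu'01, hu'ne, hu'δ, hu'Ioo, hu'nex⟩ := key
    refine ⟨n, hn, u', hu'01, hu'ne, by linarith [hu'δ, hδ'δ], ?_⟩
    rcases lt_or_gt_of_ne hu'nex with h | h
    · exact Or.inl ⟨by linarith [hu'Ioo.1], h⟩
    · exact Or.inr ⟨h, by linarith [hu'Ioo.2]⟩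
  -- landing side pigeonhole
  by_cases hL : ∀ δ > 0, ∃ n, 1 ≤ n ∧ ∃ u ∈ Icc (0:ℝ) 1, u ≠ x ∧ |u - x| < δ ∧
      f^[n] u ∈ Ioo (x - δ) x
  · exact lemA f hf hmaps x hx01 ε hε hB hL
  · push_neg at hL
    obtain ⟨δs, hδs0, hnL⟩ := hL
    have hRW : ∀ δ > 0, ∃ n, 1 ≤ n ∧ ∃ u ∈ Icc (0:ℝ) 1, u ≠ x ∧ |u - x| < δ ∧
        f^[n] u ∈ Ioo x (x + δ) := by
      intro δ hδ
      set δ'' := min δ δs with hδ''def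
      have hδ''0 : 0 < δ'' := lt_min hδ hδs0
      have h1 : δ'' ≤ δ := min_le_left _ _
      have h2 : δ'' ≤ δs := min_le_right _ _
      obtain ⟨n, hn, u, hu01, hune, hud, hv⟩ := hWraw δ'' hδ''0
      rcases hv with h | h
      · exact absurd ⟨by linarith [h.1], h.2⟩ (hnL n hn u hu01 hune (by linarith))
      · exact ⟨n, hn, u, hu01, hune, by linarith, ⟨h.1, by linarith [h.2]⟩⟩
    -- conjugate by t ↦ 1 - t
    set F : ℝ → ℝ := fun s => 1 - f (1 - s) with hFdef
    have hmaps1 : MapsTo (fun s : ℝ => 1 - s) (Icc (0:ℝ) 1) (Icc (0:ℝ) 1) := by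
      intro s hs
      constructor
      · show (0:ℝ) ≤ 1 - s
        linarith [hs.2]
      · show (1:ℝ) - s ≤ 1
        linarith [hs.1]
    have hFc : ContinuousOn F (Icc 0 1) := by
      have h1 : ContinuousOn (fun s : ℝ => f (1 - s)) (Icc 0 1) :=
        hf.comp ((continuous_const.sub continuous_id).continuousOn) hmaps1
      exact continuousOn_const.sub h1
    have hFm : MapsTo F (Icc (0:ℝ) 1) (Icc (0:ℝ) 1) := by
      intro s hs
      have h2 : f (1 - s) ∈ Icc (0:ℝ) 1 := hmaps (hmaps1 hs)
      constructor
      · show (0:ℝ) ≤ 1 - f (1 - s)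
        linarith [h2.2]
      · show (1:ℝ) - f (1 - s) ≤ 1
        linarith [h2.1]
    have hFit : ∀ (n : ℕ) (s : ℝ), F^[n] s = 1 - f^[n] (1 - s) := by
      intro n
      induction n with
      | zero => intro s; simp
      | succ m ih =>
        intro s
        rw [Function.iterate_succ_apply, Function.iterate_succ_apply]
        rw [ih (F s), hFdef]
        simp only
        ring_nf
    have hx'01 : (1 - x) ∈ Icc (0:ℝ) 1 := hmaps1 hx01
    have hB' : ∀ y ∈ Icc (0:ℝ) 1, ∀ n, 1 ≤ n → F^[n] y = 1 - x → ε ≤ |y - (1 - x)| := by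
      intro y hy n hn heq
      rw [hFit n y] at heq
      have heq2 : f^[n] (1 - y) = x := by linarith [heq]
      have := hB (1 - y) (hmaps1 hy) n hn heq2
      have habs : |1 - y - x| = |y - (1 - x)| := by
        rw [show (1 : ℝ) - y - x = -(y - (1 - x)) by ring, abs_neg]
      rw [habs] at this
      exact this
    have hW' : ∀ δ > 0, ∃ n, 1 ≤ n ∧ ∃ u ∈ Icc (0:ℝ) 1, u ≠ (1 - x) ∧ |u - (1 - x)| < δ ∧
        F^[n] u ∈ Ioo ((1 - x) - δ) (1 - x) := by
      intro δ hδ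
      obtain ⟨n, hn, u, hu01, hune, hud, hv⟩ := hRW δ hδ
      refine ⟨n, hn, 1 - u, hmaps1 hu01, ?_, ?_, ?_⟩
      · intro h
        apply hune
        linarith
      · have habs : |1 - u - (1 - x)| = |u - x| := by
          rw [show (1:ℝ) - u - (1 - x) = -(u - x) by ring, abs_neg]
        rw [habs]
        exact hud
      · rw [hFit n (1 - u)]
        have h1 : (1:ℝ) - (1 - u) = u := by ring
        rw [h1]
        exact ⟨by linarith [hv.2], by linarith [hv.1]⟩
    exact lemA F hFc hFm (1 - x) hx'01 ε hε hB' hW'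

end main
end

section
/- Let f : [0,1] → [0,1] be continuous, and suppose there exists an interval K with f^m(K) ⊆ K for some m ≥ 1 such that K contains no periodic point of f in its interior. Then every point of the interior of K converges under iteration of f^m to an endpoint of the closure of K, and this endpoint is a periodic point of f; in particular every x in the interior of K has ω(x) equal to a cycle. -/
open Set Function Filter

/-- ω-limit set of a point under iteration of `f`. -/
def omegaSet (f : ℝ → ℝ) (x : ℝ) : Set ℝ :=
  omegaLimit atTop (fun n : ℕ => f^[n]) {x}

open Topology
lemma omega_orbit_aux (f : ℝ → ℝ) (hf : ContinuousOn f (Icc 0 1))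
    (hmaps : MapsTo f (Icc 0 1) (Icc 0 1)) (m : ℕ) (hm : 0 < m)
    (x e : ℝ) (hx : x ∈ Icc (0:ℝ) 1) (he : e ∈ Icc (0:ℝ) 1)
    (hfix : f^[m] e = e)
    (hconv : Tendsto (fun i : ℕ => (f^[m])^[i] x) atTop (𝓝 e)) :
    omegaSet f x = Set.range fun i : ℕ => f^[i] e := by
  have hmapsn : ∀ n : ℕ, MapsTo f^[n] (Icc (0:ℝ) 1) (Icc 0 1) := fun n => hmaps.iterate n
  have hcontn : ∀ n : ℕ, ContinuousOn f^[n] (Icc (0:ℝ) 1) := hf.iterate hmaps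
  have hper : ∀ i : ℕ, f^[i] e = f^[i % m] e := by
    intro i
    conv_lhs => rw [← Nat.mod_add_div i m]
    rw [Function.iterate_add_apply, Function.iterate_mul, Function.iterate_fixed hfix]
  have hsub : ∀ r : ℕ, Tendsto (fun q : ℕ => f^[r + q * m] x) atTop (𝓝 (f^[r] e)) := by
    intro r
    have h1 : ∀ q : ℕ, f^[r + q * m] x = f^[r] ((f^[m])^[q] x) := by
      intro q; rw [Function.iterate_add_apply, mul_comm, Function.iterate_mul]
    simp only [h1]
    have hx' : ∀ q, (f^[m])^[q] x ∈ Icc (0:ℝ) 1 := by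
      intro q
      have := (hmapsn (m*q)) hx
      rwa [Function.iterate_mul] at this
    have h2 : Tendsto (fun q => (f^[m])^[q] x) atTop (𝓝[Icc (0:ℝ) 1] e) :=
      tendsto_nhdsWithin_of_tendsto_nhds_of_eventually_within _ hconv
        (Eventually.of_forall hx')
    exact (hcontn r e he).tendsto.comp h2
  apply Set.Subset.antisymm
  · intro y hy
    rw [omegaSet, mem_omegaLimit_singleton_iff_map_cluster_point] at hy
    by_contra hyR
    set s : Finset ℝ := (Finset.range m).image (fun r => dist y (f^[r] e)) with hs
    have hsne : s.Nonempty := ⟨dist y (f^[0] e), Finset.mem_image.mpr ⟨0, Finset.mem_range.mpr hm, rfl⟩⟩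
    set ε : ℝ := s.min' hsne with hε
    have hεpos : 0 < ε := by
      obtain ⟨r, -, hr⟩ := Finset.mem_image.mp (s.min'_mem hsne)
      rw [hε, ← hr, dist_pos]
      intro h
      exact hyR ⟨r, h.symm⟩
    have hball : ∀ r : ℕ, ε ≤ dist y (f^[r] e) := by
      intro r
      rw [hper r]
      exact s.min'_le _ (Finset.mem_image.mpr ⟨r % m, Finset.mem_range.mpr (Nat.mod_lt _ hm), rfl⟩)
    choose N hN using fun r : ℕ =>
      Metric.tendsto_atTop.mp (hsub r) (ε/2) (by positivity)
    set Q := Finset.sup (Finset.range m) N with hQ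
    have hfreq := mapClusterPt_iff_frequently.mp hy (Metric.ball y (ε/2)) (Metric.ball_mem_nhds y (by positivity))
    obtain ⟨k, hky, hk⟩ := (hfreq.and_eventually (eventually_ge_atTop ((Q+1)*m))).exists
    set r := k % m with hr
    set q := k / m with hq
    have hqQ : Q + 1 ≤ q := by
      rw [hq, Nat.le_div_iff_mul_le hm]; exact hk
    have hNr : N r ≤ Q := Finset.le_sup (Finset.mem_range.mpr (Nat.mod_lt _ hm))
    have hkeq : r + q * m = k := by rw [hr, hq, Nat.mod_add_div']
    have h1 : dist (f^[k] x) (f^[r] e) < ε/2 := by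
      rw [← hkeq]; exact hN r q (le_trans hNr (Nat.le_of_succ_le hqQ))
    have h2 : dist (f^[k] x) y < ε/2 := Metric.mem_ball.mp hky
    have h3 := hball r
    have := dist_triangle y (f^[k] x) (f^[r] e)
    rw [dist_comm y (f^[k] x)] at this
    linarith
  · rintro _ ⟨r, rfl⟩
    rw [omegaSet, mem_omegaLimit_singleton_iff_map_cluster_point]
    have hφ : Tendsto (fun q : ℕ => r + q * m) atTop atTop :=
      tendsto_atTop_mono (fun q => (Nat.le_mul_of_pos_right q hm).trans (Nat.le_add_left _ r))
        tendsto_id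
    exact MapClusterPt.of_comp hφ (hsub r).mapClusterPt

theorem stmt_19 (f : ℝ → ℝ) (hf : ContinuousOn f (Icc 0 1))
    (hmaps : MapsTo f (Icc 0 1) (Icc 0 1))
    (K : Set ℝ) (hK : K ⊆ Icc 0 1) (hKconn : K.OrdConnected)
    (m : ℕ) (hm : 1 ≤ m) (hinv : f^[m] '' K ⊆ K)
    (hnoper : ∀ p ∈ interior K, ∀ n : ℕ, 0 < n → f^[n] p ≠ p) :
    ∀ x ∈ interior K, ∃ e : ℝ,
      (e = sInf (closure K) ∨ e = sSup (closure K)) ∧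
      Tendsto (fun i : ℕ => f^[i * m] x) atTop (nhds e) ∧
      (∃ n : ℕ, 0 < n ∧ f^[n] e = e) ∧
      omegaSet f x = Set.range fun i : ℕ => f^[i] e := by
  intro x hx
  have hm0 : 0 < m := hm
  set g := f^[m] with hg
  have hxK : x ∈ K := interior_subset hx
  have hKne : K.Nonempty := ⟨x, hxK⟩
  set a := sInf (closure K) with ha
  set b := sSup (closure K) with hb
  have hclsub : closure K ⊆ Icc (0:ℝ) 1 := closure_minimal hK isClosed_Icc
  have hclne : (closure K).Nonempty := hKne.closure
  have hbddc : BddAbove (closure K) := ⟨1, fun y hy => (hclsub hy).2⟩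
  have hbddcb : BddBelow (closure K) := ⟨0, fun y hy => (hclsub hy).1⟩
  have haK : a ∈ closure K := IsClosed.csInf_mem isClosed_closure hclne hbddcb
  have hbK : b ∈ closure K := IsClosed.csSup_mem isClosed_closure hclne hbddc
  have ha01 : a ∈ Icc (0:ℝ) 1 := hclsub haK
  have hb01 : b ∈ Icc (0:ℝ) 1 := hclsub hbK
  have hKab : K ⊆ Icc a b := fun y hy =>
    ⟨csInf_le hbddcb (subset_closure hy), le_csSup hbddc (subset_closure hy)⟩
  have hIooK : Ioo a b ⊆ K := by
    intro t ht
    obtain ⟨u, hu, hut⟩ : ∃ u ∈ closure K, u < t := exists_lt_of_csInf_lt hclne ht.1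
    obtain ⟨v, hv, htv⟩ : ∃ v ∈ closure K, t < v := exists_lt_of_lt_csSup hclne ht.2
    obtain ⟨u', hu', hu't⟩ : ∃ u' ∈ K, u' < t := by
      obtain ⟨u', hu'⟩ := mem_closure_iff.mp hu (Iio t) isOpen_Iio hut
      exact ⟨u', hu'.2, hu'.1⟩
    obtain ⟨v', hv', htv'⟩ : ∃ v' ∈ K, t < v' := by
      obtain ⟨v', hv'⟩ := mem_closure_iff.mp hv (Ioi t) isOpen_Ioi htv
      exact ⟨v', hv'.2, hv'.1⟩
    exact hKconn.out hu' hv' ⟨hu't.le, htv'.le⟩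
  have hIoo : interior K = Ioo a b := by
    apply Set.Subset.antisymm
    · calc interior K ⊆ interior (Icc a b) := interior_mono hKab
        _ = Ioo a b := interior_Icc
    · exact fun t ht => (isOpen_Ioo.subset_interior_iff.mpr hIooK) ht
  rw [hIoo] at hx
  have hab : a < b := lt_trans hx.1 hx.2
  have hgmaps : MapsTo g K K := fun y hy => hinv ⟨y, hy, rfl⟩
  have hgcont : ContinuousOn g (Icc (0:ℝ) 1) := hf.iterate hmaps m
  have hnf : ∀ y ∈ Ioo a b, g y ≠ y := fun y hy =>
    hnoper y (by rw [hIoo]; exact hy) m hm0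
  -- sign dichotomy
  have hsign : (∀ y ∈ Ioo a b, y < g y) ∨ (∀ y ∈ Ioo a b, g y < y) := by
    by_contra hcon
    push_neg at hcon
    obtain ⟨⟨y₁, hy₁, hy₁'⟩, ⟨y₂, hy₂, hy₂'⟩⟩ := hcon
    have h₁ : g y₁ < y₁ := lt_of_le_of_ne hy₁' (hnf y₁ hy₁)
    have h₂ : y₂ < g y₂ := lt_of_le_of_ne hy₂' (fun h => hnf y₂ hy₂ h.symm)
    have hIcc : ∀ u v : ℝ, u ∈ Ioo a b → v ∈ Ioo a b → Icc u v ⊆ Ioo a b := by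
      intro u v hu hv t ht; exact ⟨lt_of_lt_of_le hu.1 ht.1, lt_of_le_of_lt ht.2 hv.2⟩
    have hcsub : ∀ u v : ℝ, u ∈ Ioo a b → v ∈ Ioo a b →
        ContinuousOn (fun t => g t - t) (Icc u v) := by
      intro u v hu hv
      exact ((hgcont.mono (fun t ht => hK (hIooK (hIcc u v hu hv ht)))).sub continuousOn_id)
    rcases lt_trichotomy y₁ y₂ with hlt | heq | hgt
    · have := intermediate_value_Icc hlt.le (hcsub y₁ y₂ hy₁ hy₂)
      have h0 : (0:ℝ) ∈ Icc (g y₁ - y₁) (g y₂ - y₂) := ⟨by linarith, by linarith⟩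
      obtain ⟨z, hz, hz0⟩ := this h0
      have hz0' : g z - z = 0 := hz0
      exact hnf z (hIcc y₁ y₂ hy₁ hy₂ hz) (by linarith)
    · rw [heq] at h₁; linarith
    · have := intermediate_value_Icc' hgt.le (hcsub y₂ y₁ hy₂ hy₁)
      have h0 : (0:ℝ) ∈ Icc (g y₁ - y₁) (g y₂ - y₂) := ⟨by linarith, by linarith⟩
      obtain ⟨z, hz, hz0⟩ := this h0
      have hz0' : g z - z = 0 := hz0
      exact hnf z (hIcc y₂ y₁ hy₂ hy₁ hz) (by linarith)
  -- generic limit lemma usage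
  have hx01 : x ∈ Icc (0:ℝ) 1 := hK hxK
  rcases hsign with hup | hdn
  · -- increasing case : limit is b
    have hbcl : b ∈ closure (Ioo a b) := by
      rw [closure_Ioo (ne_of_lt hab)]; exact right_mem_Icc.mpr hab.le
    haveI hne : (𝓝[Ioo a b] b).NeBot := mem_closure_iff_nhdsWithin_neBot.mp hbcl
    have hgt : Tendsto g (𝓝[Ioo a b] b) (𝓝 (g b)) :=
      (hgcont b hb01).mono (fun t ht => hK (hIooK ht))
    have hgb : g b = b := by
      have h1 : b ≤ g b := by
        refine le_of_tendsto_of_tendsto (tendsto_id.mono_right nhdsWithin_le_nhds) hgt ?_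
        exact eventually_of_mem self_mem_nhdsWithin (fun t ht => (hup t ht).le)
      have h2 : g b ≤ b := by
        refine le_of_tendsto hgt ?_
        exact eventually_of_mem self_mem_nhdsWithin
          (fun t ht => (hKab (hgmaps (hIooK ht))).2)
      linarith
    set u : ℕ → ℝ := fun i => g^[i] x with hu
    have hstep : ∀ y ∈ K, x ≤ y → y ≤ g y := by
      intro y hyK hxy
      by_cases hy : y ∈ Ioo a b
      · exact (hup y hy).le
      · have hyb : y = b := by
          rcases (hKab hyK).2.lt_or_eq with h | h
          · exact absurd ⟨lt_of_lt_of_le hx.1 hxy, h⟩ hy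
          · exact h
        rw [hyb, hgb]
    have hmem : ∀ i, u i ∈ K ∧ x ≤ u i := by
      intro i
      induction i with
      | zero => exact ⟨hxK, le_refl x⟩
      | succ n ih =>
        have h1 : u (n+1) = g (u n) := Function.iterate_succ_apply' g n x
        refine ⟨by rw [h1]; exact hgmaps ih.1, ?_⟩
        rw [h1]; exact le_trans ih.2 (hstep (u n) ih.1 ih.2)
    have hmono : Monotone u := by
      apply monotone_nat_of_le_succ
      intro n
      have h1 : u (n+1) = g (u n) := Function.iterate_succ_apply' g n x
      rw [h1]; exact hstep (u n) (hmem n).1 (hmem n).2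
    have hbdd : BddAbove (Set.range u) := ⟨b, by rintro _ ⟨i, rfl⟩; exact (hKab (hmem i).1).2⟩
    set L := ⨆ i, u i with hL
    have hconv : Tendsto u atTop (𝓝 L) := tendsto_atTop_ciSup hmono hbdd
    have hxL : x ≤ L := le_ciSup hbdd 0
    have hLb : L ≤ b := ciSup_le (fun i => (hKab (hmem i).1).2)
    have hL01 : L ∈ Icc (0:ℝ) 1 := ⟨le_trans hx01.1 hxL, le_trans hLb hb01.2⟩
    have hgL : g L = L := by
      have h1 : Tendsto (fun i => g (u i)) atTop (𝓝 (g L)) := by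
        refine (hgcont L hL01).tendsto.comp ?_
        exact tendsto_nhdsWithin_of_tendsto_nhds_of_eventually_within _ hconv
          (Eventually.of_forall (fun i => hK (hmem i).1))
      have h2 : Tendsto (fun i => g (u i)) atTop (𝓝 L) := by
        have : (fun i => g (u i)) = fun i => u (i+1) := by
          funext i; exact (Function.iterate_succ_apply' g i x).symm
        rw [this]
        exact hconv.comp (tendsto_add_atTop_nat 1)
      exact tendsto_nhds_unique h1 h2
    have hLeb : L = b := by
      rcases hLb.lt_or_eq with h | h
      · exact absurd hgL (hnf L ⟨lt_of_lt_of_le hx.1 hxL, h⟩)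
      · exact h
    rw [hLeb] at hconv
    refine ⟨b, Or.inr rfl, ?_, ⟨m, hm0, hgb⟩, ?_⟩
    · have : (fun i : ℕ => f^[i * m] x) = u := by
        funext i
        show f^[i * m] x = g^[i] x
        rw [hg, ← Function.iterate_mul, mul_comm]
      rw [this]; exact hconv
    · exact omega_orbit_aux f hf hmaps m hm0 x b hx01 hb01 hgb hconv
  · -- decreasing case : limit is a
    have hacl : a ∈ closure (Ioo a b) := by
      rw [closure_Ioo (ne_of_lt hab)]; exact left_mem_Icc.mpr hab.le
    haveI hne : (𝓝[Ioo a b] a).NeBot := mem_closure_iff_nhdsWithin_neBot.mp hacl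
    have hgt : Tendsto g (𝓝[Ioo a b] a) (𝓝 (g a)) :=
      (hgcont a ha01).mono (fun t ht => hK (hIooK ht))
    have hga : g a = a := by
      have h1 : g a ≤ a := by
        refine le_of_tendsto_of_tendsto hgt (tendsto_id.mono_right nhdsWithin_le_nhds) ?_
        exact eventually_of_mem self_mem_nhdsWithin (fun t ht => (hdn t ht).le)
      have h2 : a ≤ g a := by
        refine ge_of_tendsto hgt ?_
        exact eventually_of_mem self_mem_nhdsWithin
          (fun t ht => (hKab (hgmaps (hIooK ht))).1)
      linarith
    set u : ℕ → ℝ := fun i => g^[i] x with hu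
    have hstep : ∀ y ∈ K, y ≤ x → g y ≤ y := by
      intro y hyK hxy
      by_cases hy : y ∈ Ioo a b
      · exact (hdn y hy).le
      · have hya : y = a := by
          rcases (hKab hyK).1.lt_or_eq with h | h
          · exact absurd ⟨h, lt_of_le_of_lt hxy hx.2⟩ hy
          · exact h.symm
        rw [hya, hga]
    have hmem : ∀ i, u i ∈ K ∧ u i ≤ x := by
      intro i
      induction i with
      | zero => exact ⟨hxK, le_refl x⟩
      | succ n ih =>
        have h1 : u (n+1) = g (u n) := Function.iterate_succ_apply' g n x
        refine ⟨by rw [h1]; exact hgmaps ih.1, ?_⟩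
        rw [h1]; exact le_trans (hstep (u n) ih.1 ih.2) ih.2
    have hmono : Antitone u := by
      apply antitone_nat_of_succ_le
      intro n
      have h1 : u (n+1) = g (u n) := Function.iterate_succ_apply' g n x
      rw [h1]; exact hstep (u n) (hmem n).1 (hmem n).2
    have hbdd : BddBelow (Set.range u) := ⟨a, by rintro _ ⟨i, rfl⟩; exact (hKab (hmem i).1).1⟩
    set L := ⨅ i, u i with hL
    have hconv : Tendsto u atTop (𝓝 L) := tendsto_atTop_ciInf hmono hbdd
    have hxL : L ≤ x := ciInf_le hbdd 0
    have hLa : a ≤ L := le_ciInf (fun i => (hKab (hmem i).1).1)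
    have hL01 : L ∈ Icc (0:ℝ) 1 := ⟨le_trans ha01.1 hLa, le_trans hxL hx01.2⟩
    have hgL : g L = L := by
      have h1 : Tendsto (fun i => g (u i)) atTop (𝓝 (g L)) := by
        refine (hgcont L hL01).tendsto.comp ?_
        exact tendsto_nhdsWithin_of_tendsto_nhds_of_eventually_within _ hconv
          (Eventually.of_forall (fun i => hK (hmem i).1))
      have h2 : Tendsto (fun i => g (u i)) atTop (𝓝 L) := by
        have : (fun i => g (u i)) = fun i => u (i+1) := by
          funext i; exact (Function.iterate_succ_apply' g i x).symm
        rw [this]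
        exact hconv.comp (tendsto_add_atTop_nat 1)
      exact tendsto_nhds_unique h1 h2
    have hLea : L = a := by
      rcases hLa.lt_or_eq with h | h
      · exact absurd hgL (hnf L ⟨h, lt_of_le_of_lt hxL hx.2⟩)
      · exact h.symm
    rw [hLea] at hconv
    refine ⟨a, Or.inl rfl, ?_, ⟨m, hm0, hga⟩, ?_⟩
    · have : (fun i : ℕ => f^[i * m] x) = u := by
        funext i
        show f^[i * m] x = g^[i] x
        rw [hg, ← Function.iterate_mul, mul_comm]
      rw [this]; exact hconv
    · exact omega_orbit_aux f hf hmaps m hm0 x a hx01 ha01 hga hconv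
end
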